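/- arXiv:2307.04860 — 7 statements merged into one kernel-verified Lean document; each statement's English description precedes it below -/
import Mathlib

section
/- Let Ω be a topological space, 𝒜 a linear space of continuous real-valued functions on Ω, and ℱ the complete lattice cone generated by 𝒜. Then for every subset S ⊆ Ω, clConv_ℱ S = {ω ∈ Ω : a(ω) ≤ sup a(S) for all a ∈ 𝒜}. -/
open Filter Topology Set

lemma my_mul_iSup {ι : Type} (u : ι → EReal) {α : ℝ} (hα : 0 < α) :
    (α : EReal) * ⨆ i, u i = ⨆ i, (α : EReal) * u i := by
  apply le_antisymm
  · have h1 : (⨆ i, u i) ≤ (α⁻¹ : ℝ) * ⨆ i, (α : EReal) * u i := by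
      refine iSup_le fun i => ?_
      have : u i = (α⁻¹ : ℝ) * ((α : EReal) * u i) := by
        rw [← mul_assoc, ← EReal.coe_mul, inv_mul_cancel₀ hα.ne', EReal.coe_one, one_mul]
      rw [this]
      exact mul_le_mul_of_nonneg_left (le_iSup (fun i => (α : EReal) * u i) i)
        (by exact_mod_cast inv_nonneg.2 hα.le)
    calc (α : EReal) * ⨆ i, u i
        ≤ (α : EReal) * ((α⁻¹ : ℝ) * ⨆ i, (α : EReal) * u i) :=
          mul_le_mul_of_nonneg_left h1 (by exact_mod_cast hα.le)
      _ = ⨆ i, (α : EReal) * u i := by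
          rw [← mul_assoc, ← EReal.coe_mul, mul_inv_cancel₀ hα.ne', EReal.coe_one, one_mul]
  · exact iSup_le fun i => mul_le_mul_of_nonneg_left (le_iSup u i) (by exact_mod_cast hα.le)

lemma my_iSup_add_coe {ι : Type} [Nonempty ι] (x : ι → EReal) (c : ℝ) :
    (⨆ i, x i) + (c : EReal) = ⨆ i, (x i + (c : EReal)) := by
  apply le_antisymm
  · have h1 : (⨆ i, x i) ≤ (⨆ i, (x i + (c : EReal))) + ((-c : ℝ) : EReal) := by
      refine iSup_le fun i => ?_
      have : x i = (x i + (c : EReal)) + ((-c : ℝ) : EReal) := by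
        rw [add_assoc, ← EReal.coe_add, add_neg_cancel, EReal.coe_zero, add_zero]
      rw [this]
      exact add_le_add_left (le_iSup (fun i => x i + (c : EReal)) i) _
    calc (⨆ i, x i) + (c : EReal)
        ≤ ((⨆ i, (x i + (c : EReal))) + ((-c : ℝ) : EReal)) + (c : EReal) :=
          add_le_add_left h1 _
      _ = ⨆ i, (x i + (c : EReal)) := by
          rw [add_assoc, ← EReal.coe_add, neg_add_cancel, EReal.coe_zero, add_zero]
  · exact iSup_le fun i => add_le_add_left (le_iSup x i) _

lemma my_iSup_add_iSup {ι κ : Type} [Nonempty ι] [Nonempty κ] (u : ι → ℝ) (v : κ → ℝ) :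
    (⨆ i, ((u i : ℝ) : EReal)) + (⨆ j, ((v j : ℝ) : EReal))
      = ⨆ p : ι × κ, (((u p.1 : ℝ) : EReal) + ((v p.2 : ℝ) : EReal)) := by
  rw [iSup_prod]
  have inner : ∀ i : ι, (⨆ j, (((u i : ℝ) : EReal) + ((v j : ℝ) : EReal)))
      = ((u i : ℝ) : EReal) + ⨆ j, ((v j : ℝ) : EReal) := by
    intro i
    rw [add_comm ((u i : ℝ) : EReal), my_iSup_add_coe (fun j => ((v j : ℝ) : EReal)) (u i)]
    exact iSup_congr fun j => add_comm _ _
  simp_rw [inner]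
  have hbot : (⨆ j, ((v j : ℝ) : EReal)) ≠ ⊥ :=
    ne_bot_of_le_ne_bot (EReal.coe_ne_bot (v (Classical.arbitrary κ)))
      (le_iSup (fun j => ((v j : ℝ) : EReal)) _)
  rcases eq_or_ne (⨆ j, ((v j : ℝ) : EReal)) ⊤ with h | h
  · rw [h]
    simp_rw [EReal.coe_add_top]
    rw [iSup_const, EReal.add_top_of_ne_bot]
    exact ne_bot_of_le_ne_bot (EReal.coe_ne_bot (u (Classical.arbitrary ι)))
      (le_iSup (fun i => ((u i : ℝ) : EReal)) _)
  · lift (⨆ j, ((v j : ℝ) : EReal)) to ℝ using ⟨h, hbot⟩ with y hy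
    exact my_iSup_add_coe (fun i => ((u i : ℝ) : EReal)) y

/-- A complete lattice cone of `(-∞,∞]`-valued functions: a convex cone
stable under pointwise suprema of arbitrary families. -/
def IsCLC {X : Type} (K : Set (X → EReal)) : Prop :=
  (∀ f ∈ K, ∀ g ∈ K, ∀ α β : ℝ, 0 ≤ α → 0 ≤ β →
    (fun x => (α : EReal) * f x + (β : EReal) * g x) ∈ K) ∧
  ∀ (ι : Type) (F : ι → X → EReal), (∀ i, F i ∈ K) → (fun x => ⨆ i, F i x) ∈ K

/-- The complete lattice cone generated by a family of real-valued functions. -/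
def genCLC {X : Type} (A : Set (X → ℝ)) : Set (X → EReal) :=
  ⋂₀ {K | IsCLC K ∧ ∀ a ∈ A, (fun x => ((a x : ℝ) : EReal)) ∈ K}

/-- `A` is a linear space of real-valued functions. -/
def IsLinSpace {X : Type} (A : Set (X → ℝ)) : Prop :=
  (fun _ => (0 : ℝ)) ∈ A ∧
  ∀ a ∈ A, ∀ b ∈ A, ∀ α β : ℝ, (fun x => α * a x + β * b x) ∈ A

/-- The set of pointwise suprema of arbitrary families from `A` (coerced to `EReal`). -/
def mySups {X : Type} (A : Set (X → ℝ)) : Set (X → EReal) :=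
  {f | ∃ (ι : Type) (F : ι → X → ℝ), (∀ i, F i ∈ A) ∧
    f = fun x => ⨆ i, ((F i x : ℝ) : EReal)}

lemma mySups_smul {X : Type} {A : Set (X → ℝ)} (hA : IsLinSpace A) {g : X → EReal}
    (hg : g ∈ mySups A) {β : ℝ} (hβ : 0 ≤ β) : (fun x => (β : EReal) * g x) ∈ mySups A := by
  obtain ⟨κ, G, hG, rfl⟩ := hg
  rcases hβ.eq_or_lt with h0 | h0
  · refine ⟨Unit, fun _ => fun _ => (0 : ℝ), fun _ => hA.1, ?_⟩
    funext x
    simp [← h0, EReal.zero_mul]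
  rcases isEmpty_or_nonempty κ with hκ | hκ
  · refine ⟨κ, G, hG, ?_⟩
    funext x
    simp only [iSup_of_empty, EReal.coe_mul_bot_of_pos h0]
  · refine ⟨κ, fun j => fun x => β * G j x + 0 * G j x, fun j => hA.2 _ (hG j) _ (hG j) β 0, ?_⟩
    funext x
    rw [my_mul_iSup _ h0]
    refine iSup_congr fun j => ?_
    rw [← EReal.coe_mul]
    norm_num

lemma mySups_isCLC {X : Type} {A : Set (X → ℝ)} (hA : IsLinSpace A) : IsCLC (mySups A) := by
  constructor
  · intro f hf g hg α β hα hβ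
    rcases hα.eq_or_lt with h0 | h0
    · have : (fun x => (α : EReal) * f x + (β : EReal) * g x)
          = fun x => (β : EReal) * g x := by
        funext x; rw [← h0, EReal.coe_zero, EReal.zero_mul, zero_add]
      rw [this]; exact mySups_smul hA hg hβ
    rcases hβ.eq_or_lt with h1 | h1
    · have : (fun x => (α : EReal) * f x + (β : EReal) * g x)
          = fun x => (α : EReal) * f x := by
        funext x; rw [← h1, EReal.coe_zero, EReal.zero_mul, add_zero]
      rw [this]; exact mySups_smul hA hf hα
    obtain ⟨ι, F, hF, rfl⟩ := hf
    obtain ⟨κ, G, hG, rfl⟩ := hg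
    rcases isEmpty_or_nonempty ι with hι | hι
    · refine ⟨ι, F, hF, ?_⟩
      funext x
      simp only [iSup_of_empty, EReal.coe_mul_bot_of_pos h0, EReal.bot_add]
    rcases isEmpty_or_nonempty κ with hκ | hκ
    · refine ⟨κ, G, hG, ?_⟩
      funext x
      simp only [iSup_of_empty, EReal.coe_mul_bot_of_pos h1, EReal.add_bot]
    refine ⟨ι × κ, fun p => fun x => α * F p.1 x + β * G p.2 x,
      fun p => hA.2 _ (hF p.1) _ (hG p.2) α β, ?_⟩
    funext x
    rw [my_mul_iSup _ h0, my_mul_iSup _ h1]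
    simp_rw [← EReal.coe_mul]
    rw [my_iSup_add_iSup (fun i => α * F i x) (fun j => β * G j x)]
    exact iSup_congr fun p => (EReal.coe_add _ _).symm
  · intro ι F hF
    choose κ G hG hEq using hF
    refine ⟨(Σ i, κ i), fun p => G p.1 p.2, fun p => hG p.1 p.2, ?_⟩
    funext x
    rw [iSup_sigma]
    exact iSup_congr fun i => by rw [hEq i]

lemma genCLC_subset_mySups {X : Type} {A : Set (X → ℝ)} (hA : IsLinSpace A) :
    genCLC A ⊆ mySups A := fun f hf =>
  hf _ ⟨mySups_isCLC hA, fun a ha =>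
    ⟨Unit, fun _ => a, fun _ => ha, by funext x; exact iSup_const.symm⟩⟩

/-- The closed `ℱ`-convex hull of `S`, for `ℱ` the complete lattice cone
generated by a linear space `𝒜` of continuous functions, equals the set cut
out by the inequalities `a(ω) ≤ sup a(S)`, `a ∈ 𝒜`. -/
theorem stmt2 {Ω : Type} [TopologicalSpace Ω] (A : Set (Ω → ℝ))
    (hA : IsLinSpace A) (hcont : ∀ a ∈ A, Continuous a) (S : Set Ω) :
    {ω | ∀ f ∈ genCLC A, f ω ≤ ⨆ s ∈ S, f s}
      = {ω | ∀ a ∈ A, ((a ω : ℝ) : EReal) ≤ ⨆ s ∈ S, ((a s : ℝ) : EReal)} := by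
  ext ω
  simp only [mem_setOf_eq]
  constructor
  · intro h a ha
    exact h _ fun K hK => hK.2 a ha
  · intro h f hf
    obtain ⟨ι, F, hF, rfl⟩ := genCLC_subset_mySups hA hf
    refine iSup_le fun i => (h (F i) (hF i)).trans ?_
    refine iSup₂_le fun s hs => ?_
    exact le_iSup₂_of_le s hs (le_iSup (fun i' => ((F i' s : ℝ) : EReal)) i)
end

section
/- Let Ω be a topological space, ℬ a complex algebra of continuous complex-valued functions on Ω containing constants and closed in the compact-open topology, and let 𝒜 = {Re b : b ∈ ℬ}. Let ℱ be the complete lattice cone generated by 𝒜. Then for every compact K ⊆ Ω and every C ≥ 1: clConv_ℱ K = {ω ∈ Ω : Re b(ω) ≤ C · sup_K |b| for all b ∈ ℬ} = {ω ∈ Ω : |b(ω)| ≤ C · sup_K |b| for all b ∈ ℬ}. -/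
open Filter Topology Set

open Nat in
lemma exp_mem {Ω : Type} [TopologicalSpace Ω] (B : Subalgebra ℂ C(Ω, ℂ))
    (hclosed : IsClosed (B : Set C(Ω, ℂ))) (b : C(Ω, ℂ)) (hb : b ∈ B) :
    (⟨fun ω => Complex.exp (b ω), Complex.continuous_exp.comp b.continuous⟩ : C(Ω, ℂ)) ∈ B := by
  set e : C(Ω, ℂ) := ⟨fun ω => Complex.exp (b ω), Complex.continuous_exp.comp b.continuous⟩
  have key : Tendsto (fun t : Finset ℕ => ∑ n ∈ t, ((n ! : ℂ))⁻¹ • b ^ n) atTop (𝓝 e) := by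
    rw [ContinuousMap.tendsto_iff_forall_isCompact_tendstoUniformlyOn]
    intro K hK
    obtain ⟨R, hR⟩ : ∃ R, ∀ x ∈ K, ‖b x‖ ≤ R :=
      hK.exists_bound_of_continuousOn b.continuous.continuousOn
    have hRnn : ∀ n (x : Ω), x ∈ K → ‖((n ! : ℂ))⁻¹ • (b x) ^ n‖ ≤ R ^ n / n ! := by
      intro n x hx
      have h0 : (0:ℝ) ≤ ‖b x‖ := norm_nonneg _
      rw [norm_smul, norm_pow, div_eq_inv_mul]
      have h1 : ‖((n ! : ℂ))⁻¹‖ = ((n ! : ℝ))⁻¹ := by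
        rw [norm_inv, Complex.norm_natCast]
      rw [h1]
      gcongr
      exact hR x hx
    have hsum : Summable (fun n => R ^ n / n ! : ℕ → ℝ) := Real.summable_pow_div_factorial R
    have := tendstoUniformlyOn_tsum (f := fun n (x : Ω) => ((n ! : ℂ))⁻¹ • (b x) ^ n) hsum
      (s := K) hRnn
    have heq : ∀ x : Ω, (∑' n : ℕ, ((n ! : ℂ))⁻¹ • (b x) ^ n) = e x := by
      intro x
      rw [show e x = Complex.exp (b x) from rfl, Complex.exp_eq_exp_ℂ, NormedSpace.exp_eq_tsum (𝕂 := ℂ)]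
    have h2 : TendstoUniformlyOn (fun t : Finset ℕ => fun x => ∑ n ∈ t, ((n ! : ℂ))⁻¹ • (b x) ^ n)
        (fun x => e x) atTop K := by
      convert this using 1
      exact funext fun x => (heq x).symm
    convert h2 using 2 with t x
    simp
  have hmem : ∀ t : Finset ℕ, (∑ n ∈ t, ((n ! : ℂ))⁻¹ • b ^ n) ∈ B := by
    intro t
    exact Subalgebra.sum_mem _ fun n _ => Subalgebra.smul_mem _ (Subalgebra.pow_mem _ hb n) _
  exact hclosed.mem_of_tendsto key (Eventually.of_forall hmem)


lemma ereal_add_iSup {ι ι' : Type} (u : ι → ℝ) (v : ι' → ℝ) :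
    (⨆ i, ((u i : ℝ) : EReal)) + (⨆ j, ((v j : ℝ) : EReal))
      = ⨆ p : ι × ι', ((u p.1 + v p.2 : ℝ) : EReal) := by
  apply le_antisymm
  · apply EReal.add_le_of_forall_lt
    intro a' ha' b' hb'
    obtain ⟨i, hi⟩ := lt_iSup_iff.1 ha'
    obtain ⟨j, hj⟩ := lt_iSup_iff.1 hb'
    calc a' + b' ≤ ((u i : ℝ) : EReal) + ((v j : ℝ) : EReal) := add_le_add hi.le hj.le
    _ = ((u i + v j : ℝ) : EReal) := by rw [EReal.coe_add]
    _ ≤ _ := le_iSup (fun p : ι × ι' => ((u p.1 + v p.2 : ℝ) : EReal)) (i, j)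
  · apply iSup_le
    rintro ⟨i, j⟩
    rw [EReal.coe_add]
    exact add_le_add (le_iSup (fun i => ((u i : ℝ) : EReal)) i) (le_iSup (fun j => ((v j : ℝ) : EReal)) j)

lemma ereal_mul_iSup {ι : Type} {β : ℝ} (hβ : 0 < β) (u : ι → ℝ) :
    (β : EReal) * (⨆ i, ((u i : ℝ) : EReal)) = ⨆ i, ((β * u i : ℝ) : EReal) := by
  have hb : (0 : EReal) < (β : EReal) := EReal.coe_pos.2 hβ
  have hbt : (β : EReal) ≠ ⊤ := EReal.coe_ne_top β
  apply le_antisymm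
  · rw [EReal.mul_comm, ← EReal.le_div_iff_mul_le hb hbt]
    apply iSup_le
    intro i
    rw [EReal.le_div_iff_mul_le hb hbt, EReal.mul_comm, ← EReal.coe_mul]
    exact le_iSup (fun i => ((β * u i : ℝ) : EReal)) i
  · apply iSup_le
    intro i
    rw [EReal.coe_mul]
    exact mul_le_mul_of_nonneg_left (le_iSup (fun i => ((u i : ℝ) : EReal)) i) (le_of_lt hb)

/-- Explicit description (upper bound) for the generated complete lattice cone. -/
def supSet {X : Type} (A : Set (X → ℝ)) : Set (X → EReal) :=
  {f | ∃ (ι : Type) (a : ι → X → ℝ), (∀ i, a i ∈ A) ∧ f = fun x => ⨆ i, ((a i x : ℝ) : EReal)}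

lemma supSet_scale {X : Type} {A : Set (X → ℝ)} (hne : A.Nonempty)
    (hcomb : ∀ a ∈ A, ∀ c ∈ A, ∀ α β : ℝ, 0 ≤ α → 0 ≤ β →
      (fun x => α * a x + β * c x) ∈ A)
    {f : X → EReal} (hf : f ∈ supSet A) {α : ℝ} (hα : 0 ≤ α) :
    (fun x => (α : EReal) * f x) ∈ supSet A := by
  obtain ⟨ι, a, ha, rfl⟩ := hf
  rcases eq_or_lt_of_le hα with rfl | hpos
  · obtain ⟨a0, ha0⟩ := hne
    refine ⟨PUnit, fun _ => fun x => 0 * a0 x + 0 * a0 x,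
      fun _ => hcomb a0 ha0 a0 ha0 0 0 le_rfl le_rfl, ?_⟩
    funext x
    simp
  · refine ⟨ι, fun i => fun x => α * a i x + 0 * a i x,
      fun i => hcomb (a i) (ha i) (a i) (ha i) α 0 hα le_rfl, ?_⟩
    funext x
    simp only [zero_mul, add_zero]
    exact ereal_mul_iSup hpos (fun i => a i x)

lemma supSet_isCLC {X : Type} {A : Set (X → ℝ)} (hne : A.Nonempty)
    (hcomb : ∀ a ∈ A, ∀ c ∈ A, ∀ α β : ℝ, 0 ≤ α → 0 ≤ β →
      (fun x => α * a x + β * c x) ∈ A) : IsCLC (supSet A) := by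
  constructor
  · intro f hf g hg α β hα hβ
    obtain ⟨ι, a, ha, hfa⟩ := supSet_scale hne hcomb hf hα
    obtain ⟨ι', c, hc, hgc⟩ := supSet_scale hne hcomb hg hβ
    refine ⟨ι × ι', fun p => fun x => 1 * a p.1 x + 1 * c p.2 x,
      fun p => hcomb _ (ha p.1) _ (hc p.2) 1 1 zero_le_one zero_le_one, ?_⟩
    funext x
    have h1 : (α : EReal) * f x = ⨆ i, ((a i x : ℝ) : EReal) := congrFun hfa x
    have h2 : (β : EReal) * g x = ⨆ j, ((c j x : ℝ) : EReal) := congrFun hgc x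
    simp only [h1, h2, one_mul]
    exact ereal_add_iSup (fun i => a i x) (fun j => c j x)
  · intro ι F hF
    choose κ a ha hFa using hF
    refine ⟨(Σ i : ι, κ i), fun p => a p.1 p.2, fun p => ha p.1 p.2, ?_⟩
    funext x
    rw [iSup_sigma]
    exact iSup_congr fun i => by rw [hFa i]

lemma genCLC_subset_supSet {X : Type} {A : Set (X → ℝ)} (hne : A.Nonempty)
    (hcomb : ∀ a ∈ A, ∀ c ∈ A, ∀ α β : ℝ, 0 ≤ α → 0 ≤ β →
      (fun x => α * a x + β * c x) ∈ A) : genCLC A ⊆ supSet A := by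
  intro f hf
  exact hf (supSet A) ⟨supSet_isCLC hne hcomb,
    fun a haA => ⟨PUnit, fun _ => a, fun _ => haA, by funext x; simp⟩⟩


/-- For a complex algebra `ℬ` of continuous functions containing constants and
closed in the compact-open topology, `𝒜 = Re ℬ` and `ℱ` the complete lattice
cone generated by `𝒜`, for every compact `K` and `C ≥ 1` the closed
`ℱ`-convex hull of `K` equals `{ω : Re b(ω) ≤ C·sup_K |b| ∀ b ∈ ℬ}` which in
turn equals `{ω : |b(ω)| ≤ C·sup_K |b| ∀ b ∈ ℬ}`. -/
theorem stmt7 {Ω : Type} [TopologicalSpace Ω]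
    (B : Subalgebra ℂ C(Ω, ℂ)) (hclosed : IsClosed (B : Set C(Ω, ℂ)))
    (A : Set (Ω → ℝ)) (hA : A = {f | ∃ b ∈ B, ∀ ω, f ω = (b ω).re})
    (K : Set Ω) (hK : IsCompact K) (C : ℝ) (hC : 1 ≤ C) :
    {ω | ∀ f ∈ genCLC A, f ω ≤ ⨆ k ∈ K, f k}
        = {ω | ∀ b ∈ B, (((b ω).re : ℝ) : EReal)
            ≤ (C : EReal) * ⨆ k ∈ K, ((‖b k‖ : ℝ) : EReal)}
    ∧ {ω | ∀ b ∈ B, (((b ω).re : ℝ) : EReal)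
            ≤ (C : EReal) * ⨆ k ∈ K, ((‖b k‖ : ℝ) : EReal)}
        = {ω | ∀ b ∈ B, ((‖b ω‖ : ℝ) : EReal)
            ≤ (C : EReal) * ⨆ k ∈ K, ((‖b k‖ : ℝ) : EReal)} := by
  have hCpos : (0:ℝ) < C := lt_of_lt_of_le one_pos hC
  -- zero function is in A
  have h0A : (fun _ : Ω => (0:ℝ)) ∈ A := by
    rw [hA]; exact ⟨0, B.toSubring.zero_mem, fun ω => by simp⟩
  -- A is stable under nonneg (indeed any) combinations
  have hcomb : ∀ a ∈ A, ∀ c ∈ A, ∀ α β : ℝ, 0 ≤ α → 0 ≤ β →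
      (fun x => α * a x + β * c x) ∈ A := by
    rw [hA]
    rintro a ⟨b1, hb1, hab1⟩ c ⟨b2, hb2, hab2⟩ α β _ _
    refine ⟨(α:ℂ) • b1 + (β:ℂ) • b2,
      add_mem (Subalgebra.smul_mem _ hb1 _) (Subalgebra.smul_mem _ hb2 _), fun ω => ?_⟩
    simp [hab1 ω, hab2 ω, Complex.add_re, Complex.re_ofReal_mul]
  -- coercions of elements of A lie in genCLC A
  have hAmem : ∀ a ∈ A, (fun x => ((a x : ℝ) : EReal)) ∈ genCLC A := by
    intro a ha t ht
    exact ht.2 a ha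
  -- empty K handling: supremum over empty K is ⊥
  have hsupbot : ∀ g : Ω → EReal, (⨆ k ∈ (∅ : Set Ω), g k) = ⊥ := by
    intro g; simp
  -- if ω is in the middle set then K is nonempty
  have hKne_of_mid : ∀ ω : Ω, (∀ b ∈ B, (((b ω).re : ℝ) : EReal)
      ≤ (C : EReal) * ⨆ k ∈ K, ((‖b k‖ : ℝ) : EReal)) → K.Nonempty := by
    intro ω hω
    by_contra hne
    rw [Set.not_nonempty_iff_eq_empty] at hne
    subst hne
    have := hω 0 (zero_mem _)
    rw [hsupbot, EReal.coe_mul_bot_of_pos (by exact_mod_cast hCpos)] at this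
    simp at this
  constructor
  · -- first equality
    ext ω
    simp only [Set.mem_setOf_eq]
    constructor
    · -- S1 ⊆ S2
      intro h b hb
      have haA : (fun x : Ω => (b x).re) ∈ A := by
        rw [hA]; exact ⟨b, hb, fun _ => rfl⟩
      have h1 := h _ (hAmem _ haA)
      rcases K.eq_empty_or_nonempty with rfl | ⟨k0, hk0⟩
      · rw [hsupbot] at h1
        exact absurd h1 (by simp)
      have h2 : (⨆ k ∈ K, (((b k).re : ℝ) : EReal))
          ≤ ⨆ k ∈ K, ((‖b k‖ : ℝ) : EReal) :=
        iSup_mono fun k => iSup_mono fun _ =>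
          EReal.coe_le_coe_iff.2 (Complex.re_le_norm _)
      have hs0 : (0 : EReal) ≤ ⨆ k ∈ K, ((‖b k‖ : ℝ) : EReal) :=
        le_trans (by exact_mod_cast norm_nonneg (b k0))
          (le_biSup _ hk0)
      calc (((b ω).re : ℝ) : EReal) ≤ ⨆ k ∈ K, (((b k).re : ℝ) : EReal) := h1
        _ ≤ ⨆ k ∈ K, ((‖b k‖ : ℝ) : EReal) := h2
        _ = ((1:ℝ) : EReal) * ⨆ k ∈ K, ((‖b k‖ : ℝ) : EReal) := by
            rw [EReal.coe_one, one_mul]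
        _ ≤ (C : EReal) * ⨆ k ∈ K, ((‖b k‖ : ℝ) : EReal) :=
            mul_le_mul_of_nonneg_right (EReal.coe_le_coe_iff.2 hC) hs0
    · -- S2 ⊆ S1
      intro hω f hf
      have hKne : K.Nonempty := hKne_of_mid ω hω
      -- real-valued form of the hypothesis
      have hreal : ∀ b ∈ B, ∀ M : ℝ, (∀ k ∈ K, ‖b k‖ ≤ M) →
          (b ω).re ≤ C * M := by
        intro b hb M hM
        have h1 : (⨆ k ∈ K, ((‖b k‖ : ℝ) : EReal)) ≤ ((M : ℝ) : EReal) :=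
          iSup₂_le fun k hk => EReal.coe_le_coe_iff.2 (hM k hk)
        have h2 : (((b ω).re : ℝ) : EReal) ≤ ((C * M : ℝ) : EReal) := by
          refine le_trans (hω b hb) ?_
          rw [EReal.coe_mul]
          exact mul_le_mul_of_nonneg_left h1 (by exact_mod_cast hCpos.le)
        exact_mod_cast h2
      -- absolute-value form, via rotation
      have habs : ∀ b ∈ B, ∀ M : ℝ, (∀ k ∈ K, ‖b k‖ ≤ M) →
          ‖b ω‖ ≤ C * M := by
        intro b hb M hM
        obtain ⟨k0, hk0⟩ := hKne
        have hM0 : 0 ≤ M := le_trans (norm_nonneg _) (hM k0 hk0)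
        by_cases hz : b ω = 0
        · rw [hz]; simpa using mul_nonneg (le_trans zero_le_one hC) hM0
        set z := b ω with hzdef
        set r := ‖z‖ with hrdef
        have hr : r ≠ 0 := by simpa [hrdef] using hz
        set θ : ℂ := (starRingEnd ℂ) z / (r : ℂ) with hθ
        have hb' : θ • b ∈ B := Subalgebra.smul_mem _ hb _
        have habsθ : ‖θ‖ = 1 := by
          rw [hθ, norm_div, Complex.norm_conj, Complex.norm_real,
            Real.norm_of_nonneg (norm_nonneg z), ← hrdef, div_self hr]
        have hre : ((θ • b) ω).re = r := by
          have h1 : (θ • b) ω = θ * z := by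
            simp [hzdef]
          have h2 : Complex.normSq z = r ^ 2 := by rw [hrdef, Complex.sq_norm]
          rw [h1, hθ, div_mul_eq_mul_div, mul_comm, Complex.mul_conj, h2,
            ← Complex.ofReal_div, Complex.ofReal_re,
            sq, mul_div_assoc, div_self hr, mul_one]
        have hMb' : ∀ k ∈ K, ‖(θ • b) k‖ ≤ M := by
          intro k hk
          have : (θ • b) k = θ * b k := by simp
          rw [this, norm_mul, habsθ, one_mul]
          exact hM k hk
        have := hreal _ hb' M hMb'
        rwa [hre] at this
      -- exponential trick: removing the constant and abs
      have hexp : ∀ b ∈ B, ∀ M : ℝ, (∀ k ∈ K, (b k).re ≤ M) → (b ω).re ≤ M := by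
        intro b hb M hM
        by_contra hlt
        push_neg at hlt
        set δ := (b ω).re - M with hδdef
        have hδ : 0 < δ := by simp [hδdef]; linarith
        set t := (Real.log C + 1) / δ with htdef
        have hlogC : 0 ≤ Real.log C := Real.log_nonneg hC
        have ht : 0 < t := div_pos (by linarith) hδ
        set bt : C(Ω, ℂ) := ((t:ℂ)) • b with hbt
        have hbtB : bt ∈ B := Subalgebra.smul_mem _ hb _
        have heB := exp_mem B hclosed bt hbtB
        set e : C(Ω, ℂ) := ⟨fun ω => Complex.exp (bt ω), Complex.continuous_exp.comp bt.continuous⟩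
          with he
        have hbound : ∀ k ∈ K, ‖e k‖ ≤ Real.exp (t * M) := by
          intro k hk
          have h1 : e k = Complex.exp ((t:ℂ) * b k) := by simp [he, hbt]
          rw [h1, Complex.norm_exp]
          have : ((t:ℂ) * b k).re = t * (b k).re := Complex.re_ofReal_mul _ _
          rw [this]
          exact Real.exp_le_exp.2 (mul_le_mul_of_nonneg_left (hM k hk) ht.le)
        have h2 := habs e heB (Real.exp (t * M)) hbound
        have h3 : ‖e ω‖ = Real.exp (t * (b ω).re) := by
          have h1 : e ω = Complex.exp ((t:ℂ) * b ω) := by simp [he, hbt]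
          rw [h1, Complex.norm_exp, Complex.re_ofReal_mul]
        rw [h3, ← Real.exp_log hCpos, ← Real.exp_add] at h2
        have h4 : t * (b ω).re ≤ Real.log C + t * M := Real.exp_le_exp.1 h2
        have h5 : t * δ = Real.log C + 1 := by
          rw [htdef]; field_simp
        have : t * (b ω).re = t * M + t * δ := by rw [hδdef]; ring
        rw [this, h5] at h4
        linarith
      -- now use the explicit description of genCLC
      obtain ⟨ι, a, ha, rfl⟩ := genCLC_subset_supSet ⟨_, h0A⟩ hcomb hf
      have hstep : ∀ i, ((a i ω : ℝ) : EReal) ≤ ⨆ k ∈ K, ((a i k : ℝ) : EReal) := by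
        intro i
        obtain ⟨bi, hbi, habi⟩ := by rw [hA] at ha; exact ha i
        have hcont : Continuous (a i) := by
          have : a i = fun x => (bi x).re := funext habi
          rw [this]; exact Complex.continuous_re.comp bi.continuous
        obtain ⟨k0, hk0K, hk0⟩ := hK.exists_isMaxOn hKne hcont.continuousOn
        have h1 : (bi ω).re ≤ a i k0 := by
          refine hexp bi hbi (a i k0) fun k hk => ?_
          rw [← habi k]
          exact hk0 hk
        have h1' : a i ω ≤ a i k0 := by rw [habi ω]; exact h1
        calc ((a i ω : ℝ) : EReal) ≤ ((a i k0 : ℝ) : EReal) := EReal.coe_le_coe_iff.2 h1'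
          _ ≤ ⨆ k ∈ K, ((a i k : ℝ) : EReal) :=
            le_biSup (fun k => ((a i k : ℝ) : EReal)) hk0K
      calc (⨆ i, ((a i ω : ℝ) : EReal)) ≤ ⨆ i, ⨆ k ∈ K, ((a i k : ℝ) : EReal) :=
            iSup_mono hstep
        _ = ⨆ k ∈ K, ⨆ i, ((a i k : ℝ) : EReal) :=
            (iSup_comm).trans (iSup_congr fun k => iSup_comm)
  · -- second equality
    ext ω
    simp only [Set.mem_setOf_eq]
    constructor
    · -- S2 ⊆ S3 by rotation
      intro hω b hb
      by_cases hz : b ω = 0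
      · have := hω b hb
        rw [hz] at this ⊢
        simpa using this
      set z := b ω with hzdef
      set r := ‖z‖ with hrdef
      have hr : r ≠ 0 := by simpa [hrdef] using hz
      set θ : ℂ := (starRingEnd ℂ) z / (r : ℂ) with hθ
      have hb' : θ • b ∈ B := Subalgebra.smul_mem _ hb _
      have habsθ : ‖θ‖ = 1 := by
        rw [hθ, norm_div, Complex.norm_conj, Complex.norm_real,
          Real.norm_of_nonneg (norm_nonneg z), ← hrdef, div_self hr]
      have hre : ((θ • b) ω).re = r := by
        have h1 : (θ • b) ω = θ * z := by simp [hzdef]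
        have h2 : Complex.normSq z = r ^ 2 := by rw [hrdef, Complex.sq_norm]
        rw [h1, hθ, div_mul_eq_mul_div, mul_comm, Complex.mul_conj, h2,
          ← Complex.ofReal_div, Complex.ofReal_re,
          sq, mul_div_assoc, div_self hr, mul_one]
      have hsame : (⨆ k ∈ K, ((‖(θ • b) k‖ : ℝ) : EReal))
          = ⨆ k ∈ K, ((‖b k‖ : ℝ) : EReal) := by
        refine iSup_congr fun k => iSup_congr fun _ => ?_
        have : (θ • b) k = θ * b k := by simp
        rw [this, norm_mul, habsθ, one_mul]
      have := hω _ hb'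
      rwa [hre, hsame] at this
    · -- S3 ⊆ S2 trivially
      intro hω b hb
      exact le_trans (EReal.coe_le_coe_iff.2 (Complex.re_le_norm _)) (hω b hb)
end

section
/- Let Ω be a topological space exhaustible by compacta, and let 𝒜 be a linear space of continuous real-valued functions on Ω containing constants. Suppose that for every compact K ⊆ Ω and every C ≥ 1 the set {ω ∈ Ω : a(ω) ≤ C·sup|a|(K) for all a ∈ 𝒜} is compact. Then there exists a continuous, non-negative, proper function p : Ω → [0,∞) which is the pointwise supremum of a symmetric family (a_α) of functions in 𝒜, and which on every compact subset equals the maximum of finitely many of the a_α. -/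
open Filter Topology Set

/-- A map is proper if preimages of compact sets are compact. -/
def ProperFn {Ω : Type} [TopologicalSpace Ω] (p : Ω → ℝ) : Prop :=
  ∀ S : Set ℝ, IsCompact S → IsCompact (p ⁻¹' S)

/-- Existence of a continuous non-negative proper exhaustion function which is
the supremum of a symmetric family of members of `𝒜` and on every compact set
a maximum of finitely many of them, assuming `Ω` is exhaustible by compacta
and all the hulls `{ω : a(ω) ≤ C·sup|a|(K) ∀ a ∈ 𝒜}` are compact. -/
theorem stmt9 {Ω : Type} [TopologicalSpace Ω]
    (hex : ∃ K : ℕ → Set Ω, (∀ i, IsCompact (K i)) ∧ (⋃ i, K i) = Set.univ ∧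
      ∀ i, K i ⊆ interior (K (i + 1)))
    (A : Set (Ω → ℝ)) (hA : IsLinSpace A) (hcont : ∀ a ∈ A, Continuous a)
    (hconst : ∀ c : ℝ, (fun _ : Ω => c) ∈ A)
    (hcpt : ∀ K : Set Ω, IsCompact K → ∀ C : ℝ, 1 ≤ C →
      IsCompact {ω | ∀ a ∈ A,
        ((a ω : ℝ) : EReal) ≤ (C : EReal) * ⨆ k ∈ K, ((|a k| : ℝ) : EReal)}) :
    ∃ p : Ω → ℝ, Continuous p ∧ (∀ ω, 0 ≤ p ω) ∧ ProperFn p ∧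
      ∃ (ι : Type) (g : ι → Ω → ℝ),
        (∀ i, g i ∈ A) ∧
        (∀ i, ∃ j, g j = fun ω => - g i ω) ∧
        (∀ ω, (p ω : EReal) = ⨆ i, ((g i ω : ℝ) : EReal)) ∧
        (∀ K : Set Ω, IsCompact K → ∃ s : Finset ι, ∃ hs : s.Nonempty,
          ∀ ω ∈ K, p ω = s.sup' hs fun i => g i ω) := by
  classical
  rcases isEmpty_or_nonempty Ω with hΩ | hΩ
  · -- trivial case: Ω is empty
    haveI : Fintype Ω := Fintype.ofIsEmpty
    refine ⟨fun _ => 0, continuous_const, fun ω => le_rfl, ?_, PUnit,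
      fun _ _ => 0, fun _ => hA.1, ?_, fun ω => isEmptyElim ω, ?_⟩
    · intro S hS
      exact (Set.toFinite _).isCompact
    · intro i
      exact ⟨i, funext fun ω => isEmptyElim ω⟩
    · intro K hK
      exact ⟨{PUnit.unit}, ⟨PUnit.unit, by simp⟩, fun ω hω => isEmptyElim ω⟩
  -- main case
  obtain ⟨K₀, hK₀c, hK₀u, hK₀i⟩ := hex
  have hK₀m : Monotone K₀ := monotone_nat_of_le_succ fun i => (hK₀i i).trans interior_subset
  obtain ⟨x₀⟩ := hΩ
  obtain ⟨m₀, hm₀⟩ : ∃ m, x₀ ∈ K₀ m := by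
    have : x₀ ∈ ⋃ i, K₀ i := hK₀u ▸ mem_univ x₀
    simpa using this
  set K : ℕ → Set Ω := fun i => K₀ (m₀ + i) with hKdef
  have hKc : ∀ i, IsCompact (K i) := fun i => hK₀c _
  have hKi : ∀ i, K i ⊆ interior (K (i + 1)) := fun i => hK₀i _
  have hKm : Monotone K := fun i j h => hK₀m (by omega)
  have hKne : ∀ i, (K i).Nonempty := fun i => ⟨x₀, hK₀m (Nat.le_add_right m₀ i) hm₀⟩
  have hKu : ∀ x : Ω, ∃ i, x ∈ K i := by
    intro x
    have : x ∈ ⋃ i, K₀ i := hK₀u ▸ mem_univ x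
    obtain ⟨i, hi⟩ := mem_iUnion.1 this
    exact ⟨i, hK₀m (Nat.le_add_left i m₀) hi⟩
  -- every compact set is absorbed in some interior (K m)
  have habs : ∀ L : Set Ω, IsCompact L → ∃ m, L ⊆ interior (K m) := by
    intro L hL
    obtain ⟨s, hs⟩ := hL.elim_finite_subcover (fun i => interior (K i))
      (fun i => isOpen_interior)
      (fun x _ => by
        obtain ⟨i, hi⟩ := hKu x
        exact mem_iUnion.2 ⟨i + 1, hKi i hi⟩)
    rcases s.eq_empty_or_nonempty with rfl | hsne
    · refine ⟨0, fun x hx => absurd (hs hx) (by simp)⟩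
    · refine ⟨s.max' hsne, hs.trans ?_⟩
      intro x hx
      obtain ⟨i, his, hxi⟩ := mem_iUnion₂.1 hx
      exact interior_mono (hKm (s.le_max' i his)) hxi
  -- the constants
  set r : ℕ → ℝ := fun i => (1 / 2 : ℝ) ^ i with hrdef
  have hr0 : ∀ i, 0 < r i := fun i => pow_pos (by norm_num) i
  have hr1 : ∀ i, r i ≤ 1 := fun i => pow_le_one₀ (by norm_num) (by norm_num)
  set C : ℕ → ℝ := fun i => (2 * ((i : ℝ) + 1)) / r i with hCdef
  have hC1 : ∀ i, 1 ≤ C i := by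
    intro i
    rw [hCdef, le_div_iff₀ (hr0 i)]
    nlinarith [hr1 i, hr0 i, Nat.cast_nonneg (α := ℝ) i]
  -- the hulls
  set hull : ℕ → ℕ → Set Ω := fun i j => {ω | ∀ a ∈ A,
      ((a ω : ℝ) : EReal) ≤ ((C i : ℝ) : EReal) * ⨆ k ∈ K j, ((|a k| : ℝ) : EReal)} with hhulldef
  have hhullc : ∀ i j, IsCompact (hull i j) := fun i j => hcpt (K j) (hKc j) (C i) (hC1 i)
  -- choose the nested sequence of indices
  have hFex : ∀ i j : ℕ, ∃ m, j < m ∧ K j ∪ hull i j ⊆ interior (K m) := by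
    intro i j
    obtain ⟨m, hm⟩ := habs (K j ∪ hull i j) ((hKc j).union (hhullc i j))
    exact ⟨max m (j + 1), lt_of_lt_of_le (Nat.lt_succ_self j) (le_max_right _ _),
      hm.trans (interior_mono (hKm (le_max_left _ _)))⟩
  choose F hF1 hF2 using hFex
  set n : ℕ → ℕ := fun i => Nat.rec 0 (fun k nk => F k nk) i with hndef
  have hnsucc : ∀ i, n (i + 1) = F i (n i) := fun i => rfl
  have hnlt : ∀ i, n i < n (i + 1) := fun i => hF1 i (n i)
  have hnsm : StrictMono n := strictMono_nat_of_lt_succ hnlt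
  have hnm : Monotone n := hnsm.monotone
  have hni : ∀ i, i ≤ n i := fun i => hnsm.le_apply
  have hsub1 : ∀ i, K (n i) ⊆ interior (K (n (i + 1))) := fun i =>
    subset_union_left.trans (hF2 i (n i))
  have hsub2 : ∀ i, hull i (n i) ⊆ interior (K (n (i + 1))) := fun i =>
    subset_union_right.trans (hF2 i (n i))
  -- annuli
  set Ann : ℕ → Set Ω := fun i => K (n (i + 2)) \ interior (K (n (i + 1))) with hAnndef
  have hAnnc : ∀ i, IsCompact (Ann i) := fun i => (hKc _).diff isOpen_interior
  -- selection of functions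
  have hsel : ∀ (i : ℕ) (ω : Ω), ∃ c : Ω → ℝ, c ∈ A ∧
      (∀ k ∈ K (n i), c k ≤ 0 ∧ -c k ≤ 2 * r i) ∧ (ω ∈ Ann i → (i : ℝ) < c ω) := by
    intro i ω
    by_cases hω : ω ∈ Ann i
    · have hωh : ω ∉ hull i (n i) := fun h => hω.2 (hsub2 i h)
      rw [hhulldef] at hωh
      simp only [Set.mem_setOf_eq] at hωh
      push_neg at hωh
      obtain ⟨a, ha, halt⟩ := hωh
      obtain ⟨k₀, hk₀K, hk₀max⟩ := (hKc (n i)).exists_isMaxOn (hKne (n i))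
        ((hcont a ha).abs.continuousOn)
      have hsup : (⨆ k ∈ K (n i), ((|a k| : ℝ) : EReal)) = ((|a k₀| : ℝ) : EReal) := by
        apply le_antisymm
        · exact iSup₂_le fun k hk => EReal.coe_le_coe_iff.2 (hk₀max hk)
        · exact le_iSup₂_of_le k₀ hk₀K le_rfl
      rw [hsup, ← EReal.coe_mul] at halt
      have hgt : C i * |a k₀| < a ω := EReal.coe_lt_coe_iff.1 halt
      have haω : 0 < a ω := lt_of_le_of_lt (by positivity) hgt
      have hkey : 2 * ((i : ℝ) + 1) * |a k₀| < r i * a ω := by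
        have h1 : r i * (C i * |a k₀|) < r i * a ω :=
          mul_lt_mul_of_pos_left hgt (hr0 i)
        have h2 : r i * (C i * |a k₀|) = 2 * ((i : ℝ) + 1) * |a k₀| := by
          rw [hCdef]
          field_simp
          exact mul_div_cancel_left₀ _ (hr0 i).ne'
        linarith [h1, h2.le, h2.ge]
      set t := (2 * ((i : ℝ) + 1)) / a ω with htdef
      have htpos : 0 < t := by positivity
      have hb : (fun x => t * a x + 0 * a x) ∈ A := hA.2 a ha a ha t 0
      refine ⟨fun x => 1 * (t * a x + 0 * a x) + (-(r i)) * (fun _ : Ω => (1 : ℝ)) x,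
        hA.2 _ hb _ (hconst 1) 1 (-(r i)), ?_, ?_⟩
      · intro k hk
        have hak : |a k| ≤ |a k₀| := hk₀max hk
        have hta : t * |a k₀| < r i := by
          rw [htdef, div_mul_eq_mul_div, div_lt_iff₀ haω]
          linarith [hkey]
        have htak : t * a k ≤ t * |a k| := by
          have : a k ≤ |a k| := le_abs_self _
          nlinarith [htpos.le]
        have htak' : -(t * a k) ≤ t * |a k| := by
          have : -(a k) ≤ |a k| := neg_le_abs _
          nlinarith [htpos.le]
        have htk : t * |a k| < r i := lt_of_le_of_lt (by nlinarith [htpos.le]) hta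
        constructor
        · simp only
          nlinarith [htak, htk]
        · simp only
          nlinarith [htak', htk, hr0 i]
      · intro _
        have : t * a ω = 2 * ((i : ℝ) + 1) := div_mul_cancel₀ _ haω.ne'
        simp only
        rw [this]
        nlinarith [hr1 i, Nat.cast_nonneg (α := ℝ) i]
    · refine ⟨fun x => 1 * (fun _ : Ω => (0 : ℝ)) x + (-(r i)) * (fun _ : Ω => (1 : ℝ)) x,
        hA.2 _ hA.1 _ (hconst 1) 1 (-(r i)), ?_, fun h => absurd h hω⟩
      intro k _
      constructor
      · show 1 * (0 : ℝ) + -r i * 1 ≤ 0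
        nlinarith [hr0 i]
      · show -(1 * (0 : ℝ) + -r i * 1) ≤ 2 * r i
        nlinarith [hr0 i, hr1 i]
  choose c hcA hcK hcΩ using hsel
  -- finite subcovers of annuli
  have hcov : ∀ i, ∃ t : Finset Ω, Ann i ⊆ ⋃ ω ∈ t, (c i ω) ⁻¹' Ioi (i : ℝ) := by
    intro i
    exact (hAnnc i).elim_finite_subcover (fun ω => (c i ω) ⁻¹' Ioi (i : ℝ))
      (fun ω => (isOpen_Ioi).preimage (hcont _ (hcA i ω)))
      (fun x hx => mem_iUnion.2 ⟨x, hcΩ i x hx⟩)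
  choose t ht using hcov
  -- the family of functions, trimmed outside the finite covers
  set cc : ℕ → Ω → Ω → ℝ := fun i ω => if ω ∈ t i then c i ω else fun _ => -(r i) with hccdef
  have hccA : ∀ i ω, cc i ω ∈ A := by
    intro i ω
    rw [hccdef]
    dsimp only
    split
    · exact hcA i ω
    · exact hconst (-(r i))
  have hccle : ∀ i ω x, (x ∈ K (n i) ∨ ω ∉ t i) →
      cc i ω x ≤ 0 ∧ -(cc i ω x) ≤ 2 * r i := by
    intro i ω x hx
    rw [hccdef]
    dsimp only
    split_ifs with hω
    · rcases hx with hx | hx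
      · exact ⟨(hcK i ω x hx).1, (hcK i ω x hx).2⟩
      · exact absurd hω hx
    · refine ⟨?_, ?_⟩
      · show -r i ≤ 0
        linarith [hr0 i]
      · show -(-r i) ≤ 2 * r i
        linarith [hr0 i]
  -- the index type and the family
  set base : Option (ℕ × Ω) → Ω → ℝ := fun o =>
    match o with
    | none => fun _ => 2
    | some q => cc q.1 q.2
    with hbasedef
  set g : Bool × Option (ℕ × Ω) → Ω → ℝ :=
    fun j x => (if j.1 then (1 : ℝ) else -1) * base j.2 x with hgdef
  have hbaseA : ∀ o, base o ∈ A := by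
    intro o
    cases o with
    | none => exact hconst 2
    | some q => exact hccA q.1 q.2
  have hgA : ∀ j, g j ∈ A := by
    rintro ⟨b, o⟩
    have h := hA.2 (base o) (hbaseA o) (base o) (hbaseA o) (if b then (1 : ℝ) else -1) 0
    have he : (fun x => (if b then (1 : ℝ) else -1) * base o x + 0 * base o x)
        = g (b, o) := by
      funext x
      rw [hgdef]
      ring
    rwa [he] at h
  have hgsym : ∀ j, ∃ j', g j' = fun x => -(g j x) := by
    rintro ⟨b, o⟩
    refine ⟨(!b, o), ?_⟩
    funext x
    rw [hgdef]
    cases b <;> simp <;> ring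
  have hg2 : ∀ x, g (true, none) x = 2 := by
    intro x
    simp [hgdef, hbasedef]
  have hgfn : ∀ x, g (false, none) x = -2 := by
    intro x
    simp [hgdef, hbasedef]
  have hgts : ∀ (q : ℕ × Ω) x, g (true, some q) x = cc q.1 q.2 x := by
    intro q x
    simp [hgdef, hbasedef]
  have hgfs : ∀ (q : ℕ × Ω) x, g (false, some q) x = -(cc q.1 q.2 x) := by
    intro q x
    simp [hgdef, hbasedef]
  -- the key finiteness lemma
  have hmax : ∀ L : Set Ω, IsCompact L →
      ∃ s : Finset (Bool × Option (ℕ × Ω)), ∃ hs : s.Nonempty,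
        (true, none) ∈ s ∧ ∀ x ∈ L, ∀ j, g j x ≤ s.sup' hs fun j => g j x := by
    intro L hL
    obtain ⟨m, hm⟩ := habs L hL
    set N := m with hNdef
    have hLK : L ⊆ K (n N) := hm.trans (interior_subset.trans (hKm (hni m)))
    set s : Finset (Bool × Option (ℕ × Ω)) :=
      Finset.univ ×ˢ insert none
        (((Finset.range N).biUnion fun i => (t i).image fun ω => (i, ω)).image some)
      with hsdef
    have htn : ((true, none) : Bool × Option (ℕ × Ω)) ∈ s := by
      rw [hsdef]
      simp
    refine ⟨s, ⟨_, htn⟩, htn, ?_⟩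
    intro x hx j
    have h2 : (2 : ℝ) ≤ s.sup' ⟨_, htn⟩ fun j => g j x := by
      have := Finset.le_sup' (fun j => g j x) htn
      rwa [hg2 x] at this
    obtain ⟨b, o⟩ := j
    cases o with
    | none =>
      have : g (b, none) x ≤ 2 := by
        cases b
        · rw [hgfn x]; norm_num
        · rw [hg2 x]
      linarith
    | some q =>
      obtain ⟨i, ω⟩ := q
      by_cases hmem : i < N ∧ ω ∈ t i
      · have hin : ((b, some (i, ω)) : Bool × Option (ℕ × Ω)) ∈ s := by
          rw [hsdef]
          simp only [Finset.mem_product, Finset.mem_univ, true_and, Finset.mem_insert,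
            Finset.mem_image, Finset.mem_biUnion, Finset.mem_range]
          exact Or.inr ⟨(i, ω), ⟨i, hmem.1, ⟨ω, hmem.2, rfl⟩⟩, rfl⟩
        exact Finset.le_sup' (fun j => g j x) hin
      · have hcase : x ∈ K (n i) ∨ ω ∉ t i := by
          by_cases hω : ω ∈ t i
          · left
            have hNi : N ≤ i := by
              by_contra hNi
              exact hmem ⟨lt_of_not_ge (fun h => hNi (by omega)), hω⟩
            exact hKm (hnm hNi) (hLK hx)
          · right; exact hω
        obtain ⟨hle0, hlen⟩ := hccle i ω x hcase
        have : g (b, some (i, ω)) x ≤ 2 := by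
          cases b
          · rw [hgfs (i, ω) x]
            have : 2 * r i ≤ 2 := by nlinarith [hr1 i, hr0 i]
            nlinarith [hlen]
          · rw [hgts (i, ω) x]
            nlinarith [hle0]
        linarith
  -- define p
  set p : Ω → ℝ := fun x => ⨆ j, g j x with hpdef
  have hbdd : ∀ x, BddAbove (Set.range fun j => g j x) := by
    intro x
    obtain ⟨s, hs, _, hb⟩ := hmax {x} isCompact_singleton
    exact ⟨s.sup' hs fun j => g j x, by
      rintro y ⟨j, rfl⟩
      exact hb x rfl j⟩
  have hple : ∀ x j, g j x ≤ p x := fun x j => le_ciSup (hbdd x) j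
  have hpomax : ∀ L : Set Ω, IsCompact L →
      ∃ s : Finset (Bool × Option (ℕ × Ω)), ∃ hs : s.Nonempty,
        ∀ x ∈ L, p x = s.sup' hs fun j => g j x := by
    intro L hL
    obtain ⟨s, hs, _, hb⟩ := hmax L hL
    refine ⟨s, hs, fun x hx => le_antisymm (ciSup_le (hb x hx)) ?_⟩
    obtain ⟨j₀, hj₀s, hj₀⟩ := Finset.exists_mem_eq_sup' hs fun j => g j x
    rw [hj₀]
    exact hple x j₀
  -- continuity
  have hpc : Continuous p := by
    rw [continuous_iff_continuousAt]
    intro x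
    obtain ⟨m, hm⟩ := habs {x} isCompact_singleton
    have hxint : x ∈ interior (K (n m)) :=
      interior_mono (hKm (hni m)) (hm rfl)
    obtain ⟨s, hs, heq⟩ := hpomax (K (n m)) (hKc _)
    have hcg : ContinuousAt (fun y => s.sup' hs fun j => g j y) x :=
      ContinuousAt.finset_sup'_apply hs fun j _ => (hcont _ (hgA j)).continuousAt
    refine hcg.congr ?_
    filter_upwards [isOpen_interior.mem_nhds hxint] with y hy
    exact (heq y (interior_subset hy)).symm
  -- nonnegativity
  have hpos : ∀ x, 0 ≤ p x := by
    intro x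
    have := hple x (true, none)
    rw [hg2 x] at this
    linarith
  -- properness
  have hproper : ProperFn p := by
    intro S hS
    have hbS : BddAbove S := hS.isBounded.bddAbove
    obtain ⟨R, hR⟩ := hbS
    obtain ⟨M, hM⟩ := exists_nat_gt R
    have hsub : p ⁻¹' S ⊆ K (n (M + 2)) := by
      intro x hx
      by_contra hxK
      have hex' : ∃ m, x ∈ K (n m) := by
        obtain ⟨i, hi⟩ := hKu x
        exact ⟨i, hKm (hni i) hi⟩
      set m₁ := Nat.find hex' with hm₁def
      have hm₁ : x ∈ K (n m₁) := Nat.find_spec hex'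
      have hmin : ∀ j < m₁, x ∉ K (n j) := fun j hj => Nat.find_min hex' hj
      have hm₁gt : M + 2 < m₁ := by
        by_contra hle
        push_neg at hle
        exact hxK (hKm (hnm hle) hm₁)
      set i := m₁ - 2 with hidef
      have hi2 : i + 2 = m₁ := by omega
      have hi1 : i + 1 = m₁ - 1 := by omega
      have hxAnn : x ∈ Ann i := by
        constructor
        · rw [hi2]; exact hm₁
        · intro hxint
          exact hmin (i + 1) (by omega) (interior_subset hxint)
      obtain ⟨ω, hωt, hωx⟩ := mem_iUnion₂.1 (ht i hxAnn)
      have hωx' : (i : ℝ) < c i ω x := hωx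
      have hgx : c i ω x ≤ p x := by
        have h := hple x (true, some (i, ω))
        rw [hgts (i, ω) x] at h
        simp only [hccdef] at h
        simpa [hωt] using h
      have hpxR : p x ≤ R := hR hx
      have hiM : (M : ℝ) ≤ (i : ℝ) := by
        have : M ≤ i := by omega
        exact_mod_cast this
      linarith
    exact (hKc (n (M + 2))).of_isClosed_subset (hS.isClosed.preimage hpc) hsub
  -- EReal supremum
  have hEReal : ∀ x, ((p x : ℝ) : EReal) = ⨆ j, ((g j x : ℝ) : EReal) := by
    intro x
    apply le_antisymm
    · obtain ⟨s, hs, heq⟩ := hpomax {x} isCompact_singleton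
      obtain ⟨j₀, hj₀s, hj₀⟩ := Finset.exists_mem_eq_sup' hs fun j => g j x
      rw [heq x rfl, hj₀]
      exact le_iSup (fun j => ((g j x : ℝ) : EReal)) j₀
    · exact iSup_le fun j => EReal.coe_le_coe_iff.2 (hple x j)
  exact ⟨p, hpc, hpos, hproper, Bool × Option (ℕ × Ω), g, hgA, hgsym, hEReal,
    fun L hL => hpomax L hL⟩
end

section
/- Let Ω be a topological space and 𝒜 a linear space of continuous real-valued functions on Ω. Suppose there exists a proper, non-negative function p : Ω → [0,∞), bounded on compact sets, such that p = sup_α |a_α| for some family (a_α) in 𝒜. Then for every compact K ⊆ Ω and every C ≥ 1, the set {ω ∈ Ω : a(ω) ≤ C·sup|a|(K) for all a ∈ 𝒜} is compact; in fact it is contained in p⁻¹([0, C·t]) whenever K ⊆ p⁻¹([0,t]). -/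
open Filter Topology Set

/-- If there is a proper non-negative function `p`, bounded on compacta, with
`p = sup_α |a_α|` for a family in `𝒜`, then for every compact `K` and `C ≥ 1`
the set `{ω : a(ω) ≤ C·sup|a|(K) ∀ a ∈ 𝒜}` is compact; in fact it is
contained in `p⁻¹([0, C·t])` whenever `K ⊆ p⁻¹([0,t])`. -/
theorem stmt10 {Ω : Type} [TopologicalSpace Ω]
    (A : Set (Ω → ℝ)) (hA : IsLinSpace A) (hcont : ∀ a ∈ A, Continuous a)
    (p : Ω → ℝ) (hp0 : ∀ ω, 0 ≤ p ω) (hproper : ProperFn p)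
    (hbdd : ∀ K : Set Ω, IsCompact K → BddAbove (p '' K))
    (ι : Type) (g : ι → Ω → ℝ) (hg : ∀ i, g i ∈ A)
    (hsup : ∀ ω, (p ω : EReal) = ⨆ i, ((|g i ω| : ℝ) : EReal)) :
    ∀ K : Set Ω, IsCompact K → ∀ C : ℝ, 1 ≤ C →
      IsCompact {ω | ∀ a ∈ A,
          ((a ω : ℝ) : EReal) ≤ (C : EReal) * ⨆ k ∈ K, ((|a k| : ℝ) : EReal)} ∧
      ∀ t : ℝ, K ⊆ p ⁻¹' Set.Icc 0 t →
        {ω | ∀ a ∈ A,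
            ((a ω : ℝ) : EReal) ≤ (C : EReal) * ⨆ k ∈ K, ((|a k| : ℝ) : EReal)}
          ⊆ p ⁻¹' Set.Icc 0 (C * t) := by
  intro K hK C hC
  have hC0 : (0 : ℝ) < C := lt_of_lt_of_le one_pos hC
  set S := {ω | ∀ a ∈ A,
      ((a ω : ℝ) : EReal) ≤ (C : EReal) * ⨆ k ∈ K, ((|a k| : ℝ) : EReal)} with hSdef
  -- A is closed under negation
  have hneg : ∀ a ∈ A, (fun x => -a x) ∈ A := by
    intro a ha
    have h := hA.2 a ha a ha (-1) 0
    have he : (fun x => (-1 : ℝ) * a x + 0 * a x) = fun x => -a x := by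
      funext x; ring
    rwa [he] at h
  -- key bound
  have key : ∀ t : ℝ, (∀ k ∈ K, p k ≤ t) → ∀ ω ∈ S, p ω ≤ C * t := by
    intro t ht ω hω
    have habs : ∀ a ∈ A, (∀ k ∈ K, |a k| ≤ t) → a ω ≤ C * t := by
      intro a ha hat
      have h1 := hω a ha
      have h2 : (⨆ k ∈ K, ((|a k| : ℝ) : EReal)) ≤ (t : EReal) := by
        apply iSup₂_le; intro k hk; exact_mod_cast hat k hk
      have h3 : ((a ω : ℝ) : EReal) ≤ ((C * t : ℝ) : EReal) := by
        calc ((a ω : ℝ) : EReal) ≤ (C : EReal) * ⨆ k ∈ K, ((|a k| : ℝ) : EReal) := h1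
          _ ≤ (C : EReal) * (t : EReal) :=
            mul_le_mul_of_nonneg_left h2 (by exact_mod_cast hC0.le)
          _ = ((C * t : ℝ) : EReal) := by rw [EReal.coe_mul]
      exact_mod_cast h3
    have habs2 : ∀ i, |g i ω| ≤ C * t := by
      intro i
      have hKa : ∀ k ∈ K, |g i k| ≤ t := by
        intro k hk
        have h4 : ((|g i k| : ℝ) : EReal) ≤ (p k : EReal) := by
          rw [hsup k]; exact le_iSup (fun j => ((|g j k| : ℝ) : EReal)) i
        have h5 : |g i k| ≤ p k := by exact_mod_cast h4
        linarith [ht k hk]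
      have h1 : g i ω ≤ C * t := habs _ (hg i) hKa
      have h2 : -g i ω ≤ C * t := by
        have := habs (fun x => -g i x) (hneg _ (hg i))
          (by intro k hk; simpa using hKa k hk)
        simpa using this
      exact abs_le.mpr ⟨by linarith, h1⟩
    have h6 : (p ω : EReal) ≤ ((C * t : ℝ) : EReal) := by
      rw [hsup ω]; apply iSup_le; intro i; exact_mod_cast habs2 i
    exact_mod_cast h6
  -- S is closed
  have hclosed : IsClosed S := by
    have hrw : S = ⋂ a ∈ A,
        {ω | ((a ω : ℝ) : EReal) ≤ (C : EReal) * ⨆ k ∈ K, ((|a k| : ℝ) : EReal)} := by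
      ext ω; simp [hSdef]
    rw [hrw]
    refine isClosed_biInter fun a ha => ?_
    exact isClosed_le (continuous_coe_real_ereal.comp (hcont a ha)) continuous_const
  rcases Set.eq_empty_or_nonempty K with hKe | hKe
  · -- K empty: S is empty
    have hSe : S = ∅ := by
      ext ω
      simp only [Set.mem_empty_iff_false, iff_false, hSdef, Set.mem_setOf_eq]
      intro h
      have h0 := h _ hA.1
      rw [hKe, iSup_emptyset, EReal.coe_mul_bot_of_pos hC0] at h0
      exact absurd h0 (by simp)
    refine ⟨by rw [hSe]; exact isCompact_empty, ?_⟩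
    intro t _
    rw [hSe]; exact empty_subset _
  · set M := sSup (p '' K) with hM
    have hMle : ∀ k ∈ K, p k ≤ M := fun k hk => le_csSup (hbdd K hK) ⟨k, hk, rfl⟩
    constructor
    · have hsub : S ⊆ p ⁻¹' Set.Icc 0 (C * M) :=
        fun ω hω => ⟨hp0 ω, key M hMle ω hω⟩
      exact (hproper _ isCompact_Icc).of_isClosed_subset hclosed hsub
    · intro t ht ω hω
      exact ⟨hp0 ω, key t (fun k hk => (ht hk).2) ω hω⟩
end

section
/- Let Ω be a topological space and ℱ a convex cone of continuous functions on Ω containing constants and satisfying the maximum principle. Let 𝒢 be the complete lattice cone generated by ℱ. Let K₁, K₂, K₃, K₄ be compact ℱ-convex subsets of Ω with K₁ ⊊ int K₂, K₂ ⊆ int K₃, K₃ ⊆ K₄. Then there exists a non-negative continuous function p ∈ 𝒢 (a pointwise maximum of finitely many normalized elements of ℱ with 0) such that K₁ ⊆ p⁻¹({0}) and K₂ ⊆ K₄ ∩ p⁻¹((-∞,1]) ⊆ K₃. -/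
open Filter Topology Set

/-- `F` is a convex cone of real-valued functions. -/
def IsConvexConeFn {X : Type} (F : Set (X → ℝ)) : Prop :=
  ∀ f ∈ F, ∀ g ∈ F, ∀ α β : ℝ, 0 ≤ α → 0 ≤ β →
    (fun x => α * f x + β * g x) ∈ F

/-- `F` satisfies the maximum principle: non-constant members have strictly
smaller suprema on compacta than on open sets containing them. -/
def MaxPrin {Ω : Type} [TopologicalSpace Ω] (F : Set (Ω → ℝ)) : Prop :=
  ∀ f ∈ F, (∃ x y, f x ≠ f y) →
    ∀ K U : Set Ω, IsCompact K → IsOpen U → K ⊆ U →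
      (⨆ k ∈ K, ((f k : ℝ) : EReal)) < ⨆ u ∈ U, ((f u : ℝ) : EReal)

/-- A set is `F`-convex if it coincides with its closed `F`-convex hull. -/
def FConvexSet {Ω : Type} [TopologicalSpace Ω] (F : Set (Ω → ℝ)) (K : Set Ω) : Prop :=
  K = {ω | ∀ f ∈ F, ((f ω : ℝ) : EReal) ≤ ⨆ k ∈ K, ((f k : ℝ) : EReal)}

private lemma contMaxSup {Ω : Type} [TopologicalSpace Ω] :
    ∀ (m : ℕ) (h : Fin m → Ω → ℝ), (∀ i, Continuous (h i)) →
      Continuous (fun ω => max (⨆ i, h i ω) 0)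
  | 0, h, _ => by
      simp only [Real.iSup_of_isEmpty, max_self]
      exact continuous_const
  | (m+1), h, hc => by
      have key : (fun ω => max (⨆ i, h i ω) 0) =
          fun ω => max (max (⨆ i : Fin m, h i.castSucc ω) 0)
            (max (h (Fin.last m) ω) 0) := by
        funext ω
        have bdd : BddAbove (Set.range fun i : Fin (m+1) => h i ω) :=
          Set.Finite.bddAbove (Set.finite_range _)
        have h0R : (0:ℝ) ≤ max (max (⨆ i : Fin m, h i.castSucc ω) 0)
            (max (h (Fin.last m) ω) 0) := le_max_of_le_left (le_max_right _ _)
        apply le_antisymm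
        · refine max_le (Real.iSup_le (fun i => ?_) h0R) h0R
          induction i using Fin.lastCases with
          | last => exact le_max_of_le_right (le_max_left _ _)
          | cast j =>
            exact le_max_of_le_left (le_max_of_le_left
              (le_ciSup (f := fun j : Fin m => h j.castSucc ω)
                (Set.Finite.bddAbove (Set.finite_range _)) j))
        · refine max_le (max_le ?_ (le_max_right _ _)) (max_le ?_ (le_max_right _ _))
          · exact Real.iSup_le
              (fun j => le_max_of_le_left (le_ciSup bdd j.castSucc))
              (le_max_right _ _)
          · exact le_max_of_le_left (le_ciSup bdd (Fin.last m))
      rw [key]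
      exact (contMaxSup m _ fun i => hc i.castSucc).max ((hc (Fin.last m)).max continuous_const)

/-- The annulus lemma: given compact `F`-convex sets `K₁ ⊊ int K₂ ⊆ K₂ ⊆ int K₃`,
`K₃ ⊆ K₄`, there is a non-negative continuous `p` in the complete lattice cone
generated by `F` — a pointwise maximum of finitely many elements of `F` with `0` —
vanishing on `K₁` and with `K₂ ⊆ K₄ ∩ p⁻¹((-∞,1]) ⊆ K₃`. -/
theorem stmt13 {Ω : Type} [TopologicalSpace Ω] (F : Set (Ω → ℝ))
    (hcone : IsConvexConeFn F) (hcont : ∀ f ∈ F, Continuous f)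
    (hconst : ∀ c : ℝ, (fun _ : Ω => c) ∈ F) (hmax : MaxPrin F)
    (K₁ K₂ K₃ K₄ : Set Ω)
    (h₁ : IsCompact K₁) (h₂ : IsCompact K₂) (h₃ : IsCompact K₃) (h₄ : IsCompact K₄)
    (hc₁ : FConvexSet F K₁) (hc₂ : FConvexSet F K₂) (hc₃ : FConvexSet F K₃)
    (hc₄ : FConvexSet F K₄)
    (h₁₂ : K₁ ⊂ interior K₂) (h₂₃ : K₂ ⊆ interior K₃) (h₃₄ : K₃ ⊆ K₄) :
    ∃ p : Ω → ℝ, Continuous p ∧ (∀ ω, 0 ≤ p ω) ∧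
      (fun ω => ((p ω : ℝ) : EReal)) ∈ genCLC F ∧
      (∃ (n : ℕ) (f : Fin n → Ω → ℝ), (∀ i, f i ∈ F) ∧
        ∀ ω, p ω = max (⨆ i : Fin n, f i ω) 0) ∧
      K₁ ⊆ p ⁻¹' {0} ∧
      K₂ ⊆ K₄ ∩ p ⁻¹' Set.Iic 1 ∧
      K₄ ∩ p ⁻¹' Set.Iic 1 ⊆ K₃ := by
  classical
  have hK₂₄ : K₂ ⊆ K₄ := fun x hx => h₃₄ (interior_subset (h₂₃ hx))
  have hK₁₂ : K₁ ⊆ K₂ := h₁₂.subset.trans interior_subset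
  set C : Set Ω := K₄ \ interior K₃ with hCdef
  have hCcomp : IsCompact C := h₄.diff isOpen_interior
  have key : ∀ x ∈ C, ∃ g ∈ F, 1 < g x ∧ ∀ k ∈ K₂, g k ≤ 0 := by
    intro x hx
    have hxK₂ : x ∉ K₂ := fun h => hx.2 (h₂₃ h)
    rw [hc₂, Set.mem_setOf_eq] at hxK₂
    push_neg at hxK₂
    obtain ⟨f, hf, hlt⟩ := hxK₂
    obtain ⟨c, hc1, hc2⟩ := exists_between hlt
    have hcb : c ≠ ⊥ := ne_bot_of_gt hc1
    have hct : c ≠ ⊤ := ne_top_of_lt hc2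
    set a := c.toReal with hadef
    have hca : (a : EReal) = c := EReal.coe_toReal hct hcb
    have haf : a < f x := by
      rw [← EReal.coe_lt_coe_iff, hca]; exact hc2
    have hk : ∀ k ∈ K₂, f k ≤ a := by
      intro k hk
      have h1 : ((f k : ℝ) : EReal) ≤ ⨆ k ∈ K₂, ((f k : ℝ) : EReal) := le_biSup (f := fun k => ((f k : ℝ) : EReal)) hk
      have h2 := h1.trans_lt hc1
      rw [← hca, EReal.coe_lt_coe_iff] at h2
      exact h2.le
    have hpos : 0 < f x - a := sub_pos.2 haf
    set lam := 2 / (f x - a) with hlamdef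
    have hlampos : 0 < lam := div_pos two_pos hpos
    refine ⟨fun y => lam * f y + lam * (-a),
      hcone f hf (fun _ => -a) (hconst (-a)) lam lam hlampos.le hlampos.le, ?_, ?_⟩
    · have h2 : lam * (f x - a) = 2 := div_mul_cancel₀ 2 hpos.ne'
      show (1:ℝ) < lam * f x + lam * (-a)
      calc (1:ℝ) < 2 := one_lt_two
        _ = lam * (f x - a) := h2.symm
        _ = lam * f x + lam * (-a) := by ring
    · intro k hk2
      have hs : f k - a ≤ 0 := sub_nonpos.2 (hk k hk2)
      show lam * f k + lam * (-a) ≤ 0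
      calc lam * f k + lam * (-a) = lam * (f k - a) := by ring
        _ ≤ 0 := mul_nonpos_of_nonneg_of_nonpos hlampos.le hs
  choose! g hgF hg1 hg0 using key
  obtain ⟨t, htC, hcover⟩ := hCcomp.elim_nhds_subcover (fun x => (g x) ⁻¹' Set.Ioi 1)
    (fun x hx => ((isOpen_Ioi.preimage (hcont _ (hgF x hx))).mem_nhds (hg1 x hx)))
  set e := t.equivFin with hedef
  set f : Fin (t.card + 1) → Ω → ℝ :=
    fun i => if h : (i : ℕ) < t.card then g ((e.symm ⟨i, h⟩ : t) : Ω) else fun _ => 0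
    with hfdef
  have fmem : ∀ i, f i ∈ F := by
    intro i
    simp only [hfdef]
    by_cases h : (i : ℕ) < t.card
    · rw [dif_pos h]; exact hgF _ (htC _ (e.symm ⟨i, h⟩).2)
    · rw [dif_neg h]; exact hconst 0
  have fnonpos : ∀ i, ∀ k ∈ K₂, f i k ≤ 0 := by
    intro i k hk
    simp only [hfdef]
    by_cases h : (i : ℕ) < t.card
    · rw [dif_pos h]; exact hg0 _ (htC _ (e.symm ⟨i, h⟩).2) k hk
    · rw [dif_neg h]
  have fcont : ∀ i, Continuous (f i) := fun i => hcont _ (fmem i)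
  set p : Ω → ℝ := fun ω => max (⨆ i, f i ω) 0 with hpdef
  have hlast : f (Fin.last t.card) = fun _ => 0 := by
    simp only [hfdef]; simp
  have hach : ∀ ω, ∃ j : Fin (t.card + 1),
      (∀ i, f i ω ≤ f j ω) ∧ p ω = f j ω := by
    intro ω
    obtain ⟨j, hj⟩ := Finite.exists_max (fun i => f i ω)
    refine ⟨j, hj, ?_⟩
    have hs : (⨆ i, f i ω) = f j ω :=
      le_antisymm (ciSup_le hj) (le_ciSup (f := fun i => f i ω) (Set.Finite.bddAbove (Set.finite_range _)) j)
    have h0 : (0:ℝ) ≤ f j ω := by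
      have := hj (Fin.last t.card)
      rwa [hlast] at this
    rw [hpdef]
    simp only [hs, max_eq_left h0]
  have pzero : ∀ ω ∈ K₂, p ω = 0 := by
    intro ω hω
    rw [hpdef]
    exact max_eq_right (Real.iSup_le (fun i => fnonpos i ω hω) le_rfl)
  have hmem : (fun ω => ((p ω : ℝ) : EReal)) ∈ genCLC F := by
    rw [genCLC, Set.mem_sInter]
    rintro K ⟨⟨-, hKsup⟩, hKF⟩
    have hm := hKsup (Fin (t.card + 1)) (fun i x => ((f i x : ℝ) : EReal))
      (fun i => hKF (f i) (fmem i))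
    have heq : (fun ω => ((p ω : ℝ) : EReal))
        = fun x => ⨆ i, ((f i x : ℝ) : EReal) := by
      funext ω
      obtain ⟨j, hj, hpj⟩ := hach ω
      rw [hpj]
      apply le_antisymm
      · exact le_iSup (fun i => ((f i ω : ℝ) : EReal)) j
      · exact iSup_le fun i => EReal.coe_le_coe_iff.2 (hj i)
    rw [heq]
    exact hm
  refine ⟨p, ?_, fun ω => le_max_right _ _, hmem,
    ⟨t.card + 1, f, fmem, fun ω => by rw [hpdef]⟩, ?_, ?_, ?_⟩
  · rw [hpdef]; exact contMaxSup _ f fcont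
  · intro ω hω
    exact pzero ω (hK₁₂ hω)
  · intro ω hω
    refine ⟨hK₂₄ hω, ?_⟩
    simp only [Set.mem_preimage, Set.mem_Iic, pzero ω hω]
    exact zero_le_one
  · rintro ω ⟨hω4, hω1⟩
    by_cases hint : ω ∈ interior K₃
    · exact interior_subset hint
    · exfalso
      have hωC : ω ∈ C := ⟨hω4, hint⟩
      obtain ⟨x, hxt, hgx⟩ := Set.mem_iUnion₂.mp (hcover hωC)
      have hgx1 : 1 < g x ω := hgx
      set x' : t := ⟨x, hxt⟩ with hx'def
      obtain ⟨idx, hidx⟩ : ∃ idx : Fin t.card, idx = e x' := ⟨e x', rfl⟩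
      have hi : ((idx.castSucc : Fin (t.card + 1)) : ℕ) < t.card := by
        simpa using idx.isLt
      have hfi : f idx.castSucc = g x := by
        simp only [hfdef]
        rw [dif_pos hi]
        have h1 : (⟨((idx.castSucc : Fin (t.card + 1)) : ℕ), hi⟩ : Fin t.card) = idx :=
          Fin.ext (by simp)
        rw [h1, hidx, Equiv.symm_apply_apply]
      have hp1 : 1 < p ω := by
        calc (1:ℝ) < g x ω := hgx1
        _ = f idx.castSucc ω := (congrFun hfi ω).symm
        _ ≤ ⨆ i, f i ω := le_ciSup (f := fun i => f i ω)
              (Set.Finite.bddAbove (Set.finite_range _)) idx.castSucc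
        _ ≤ p ω := le_max_left _ _
      exact absurd (Set.mem_Iic.mp hω1) (not_le.2 hp1)
end

section
/- Let Ω be a topological space, ℱ a convex cone of continuous functions on Ω containing constants and satisfying the maximum principle, and 𝒢 the complete lattice cone generated by ℱ. Suppose there exist compact ℱ-convex sets K₁ ⊊ int K₂, K_i ⊊ int K_{i+1} for all i, with ⋃ K_i = Ω. Then there exists a continuous, proper, non-negative function p ∈ 𝒢 such that on each compact subset of Ω, p equals the maximum of finitely many functions of the form max(αf + β, 0) with f ∈ ℱ. -/
open Filter Topology Set

set_option linter.unusedSectionVars false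
section AuxCLC
variable {X : Type}

lemma genCLC_isCLC (A : Set (X → ℝ)) : IsCLC (genCLC A) := by
  constructor
  · intro f hf g hg α β hα hβ
    refine Set.mem_sInter.2 fun S hS => ?_
    exact hS.1.1 f (Set.mem_sInter.1 hf S hS) g (Set.mem_sInter.1 hg S hS) α β hα hβ
  · intro ι Fam hFam
    refine Set.mem_sInter.2 fun S hS => ?_
    exact hS.1.2 ι Fam fun i => Set.mem_sInter.1 (hFam i) S hS

lemma mem_genCLC {A : Set (X → ℝ)} {a : X → ℝ} (ha : a ∈ A) :
    (fun x => ((a x : ℝ) : EReal)) ∈ genCLC A :=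
  Set.mem_sInter.2 fun _ hS => hS.2 a ha

lemma genCLC_sup {A : Set (X → ℝ)} {f g : X → EReal} (hf : f ∈ genCLC A)
    (hg : g ∈ genCLC A) : (fun x => f x ⊔ g x) ∈ genCLC A := by
  have h := (genCLC_isCLC A).2 Bool (fun b => if b then f else g)
    (by intro b; cases b <;> simpa)
  have heq : (fun x => ⨆ b : Bool, (if b then f else g) x) = fun x => f x ⊔ g x := by
    funext x; rw [iSup_bool_eq]; simp
  rwa [heq] at h

end AuxCLC

section AuxMsup
variable {Ω : Type} [TopologicalSpace Ω]

def msup (l : List (Ω → ℝ)) (ω : Ω) : ℝ := l.foldr (fun g r => max (g ω) r) 0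

lemma msup_nil (ω : Ω) : msup ([] : List (Ω → ℝ)) ω = 0 := rfl

lemma msup_cons (g : Ω → ℝ) (l : List (Ω → ℝ)) (ω : Ω) :
    msup (g :: l) ω = max (g ω) (msup l ω) := rfl

lemma msup_nonneg (l : List (Ω → ℝ)) (ω : Ω) : 0 ≤ msup l ω := by
  induction l with
  | nil => simp [msup_nil]
  | cons a l ih => rw [msup_cons]; exact ih.trans (le_max_right _ _)

lemma le_msup {l : List (Ω → ℝ)} {g : Ω → ℝ} (hg : g ∈ l) (ω : Ω) :
    g ω ≤ msup l ω := by
  induction l with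
  | nil => simp at hg
  | cons a l ih =>
    rw [msup_cons]
    rcases List.mem_cons.1 hg with h | h
    · subst h; exact le_max_left _ _
    · exact (ih h).trans (le_max_right _ _)

lemma msup_le {l : List (Ω → ℝ)} {c : ℝ} (hc : 0 ≤ c) (ω : Ω)
    (h : ∀ g ∈ l, g ω ≤ c) : msup l ω ≤ c := by
  induction l with
  | nil => simpa [msup_nil] using hc
  | cons a l ih =>
    rw [msup_cons]
    exact max_le (h a (List.mem_cons_self)) (ih fun g hg => h g (List.mem_cons_of_mem _ hg))

lemma msup_continuous {l : List (Ω → ℝ)} (h : ∀ g ∈ l, Continuous g) :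
    Continuous (msup l) := by
  induction l with
  | nil => exact continuous_const
  | cons a l ih =>
    have : msup (a :: l) = fun ω => max (a ω) (msup l ω) := rfl
    rw [this]
    exact (h a (List.mem_cons_self)).max (ih fun g hg => h g (List.mem_cons_of_mem _ hg))

lemma fin_succ_sup (n : ℕ) (f : Fin (n + 1) → ℝ) (hf : ∀ i, 0 ≤ f i) :
    ⨆ i, f i = max (f 0) (⨆ i : Fin n, f i.succ) := by
  have hbdd : BddAbove (Set.range f) := (Set.finite_range f).bddAbove
  have hbdd' : BddAbove (Set.range fun i : Fin n => f i.succ) :=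
    (Set.finite_range _).bddAbove
  apply le_antisymm
  · refine Real.iSup_le ?_ ((hf 0).trans (le_max_left _ _))
    intro i
    induction i using Fin.cases with
    | zero => exact le_max_left _ _
    | succ j => exact (le_ciSup hbdd' j).trans (le_max_right _ _)
  · refine max_le (le_ciSup hbdd 0) (Real.iSup_le (fun i => le_ciSup hbdd i.succ) ?_)
    exact (hf 0).trans (le_ciSup hbdd 0)

lemma msup_eq_iSup (l : List (Ω → ℝ)) (h0 : ∀ g ∈ l, ∀ ω, 0 ≤ g ω) (ω : Ω) :
    msup l ω = ⨆ i : Fin l.length, l.get i ω := by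
  induction l with
  | nil => simp [msup_nil, Real.iSup_of_isEmpty]
  | cons a l ih =>
    rw [msup_cons, ih (fun g hg => h0 g (List.mem_cons_of_mem _ hg))]
    simp only [List.length_cons]
    rw [fin_succ_sup l.length (fun i : Fin (l.length + 1) => (a :: l).get i ω)
      (fun i => h0 _ ((a :: l).get_mem i) ω)]
    simp
    rfl

end AuxMsup

section AuxGood
variable {Ω : Type} [TopologicalSpace Ω] {F : Set (Ω → ℝ)}

def GoodFn (F : Set (Ω → ℝ)) (g : Ω → ℝ) : Prop :=
  ∃ f ∈ F, ∃ α β : ℝ, 0 ≤ α ∧ ∀ ω, g ω = max (α * f ω + β) 0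

lemma GoodFn.nonneg {g : Ω → ℝ} (h : GoodFn F g) (ω : Ω) : 0 ≤ g ω := by
  obtain ⟨f, _, α, β, _, hg⟩ := h; rw [hg]; exact le_max_right _ _

lemma GoodFn.continuous {g : Ω → ℝ} (h : GoodFn F g)
    (hcont : ∀ f ∈ F, Continuous f) : Continuous g := by
  obtain ⟨f, hf, α, β, _, hg⟩ := h
  have : g = fun ω => max (α * f ω + β) 0 := funext hg
  rw [this]
  exact ((continuous_const.mul (hcont f hf)).add continuous_const).max continuous_const

lemma GoodFn.coe_mem {g : Ω → ℝ} (h : GoodFn F g) (hcone : IsConvexConeFn F)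
    (hconst : ∀ c : ℝ, (fun _ : Ω => c) ∈ F) :
    (fun ω => ((g ω : ℝ) : EReal)) ∈ genCLC F := by
  obtain ⟨f, hf, α, β, hα, hg⟩ := h
  have haff : (fun x => α * f x + β) ∈ F := by
    have := hcone f hf (fun _ => β) (hconst β) α 1 hα zero_le_one
    simpa using this
  have h1 := mem_genCLC (A := F) haff
  have h0 := mem_genCLC (A := F) (hconst 0)
  have heq : (fun ω => ((g ω : ℝ) : EReal)) =
      fun x => ((α * f x + β : ℝ) : EReal) ⊔ (((0 : ℝ) : EReal)) := by
    funext x; rw [hg x]; exact_mod_cast rfl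
  rw [heq]; exact genCLC_sup h1 h0

lemma msup_coe_mem (hcone : IsConvexConeFn F)
    (hconst : ∀ c : ℝ, (fun _ : Ω => c) ∈ F) (l : List (Ω → ℝ))
    (hl : ∀ g ∈ l, GoodFn F g) :
    (fun ω => ((msup l ω : ℝ) : EReal)) ∈ genCLC F := by
  induction l with
  | nil => exact mem_genCLC (A := F) (hconst 0)
  | cons a l ih =>
    have h1 := (hl a (List.mem_cons_self)).coe_mem hcone hconst
    have h2 := ih fun g hg => hl g (List.mem_cons_of_mem _ hg)
    have heq : (fun ω => ((msup (a :: l) ω : ℝ) : EReal)) =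
        fun ω => ((a ω : ℝ) : EReal) ⊔ ((msup l ω : ℝ) : EReal) := by
      funext ω; rw [msup_cons]; exact_mod_cast rfl
    rw [heq]; exact genCLC_sup h1 h2

end AuxGood

/-- The exhaustion lemma: given a sequence of compact `F`-convex sets
`K i ⊊ int K (i+1)` with `⋃ K i = Ω`, there is a continuous, proper,
non-negative `p` in the complete lattice cone generated by `F` that on each
compact set is the maximum of finitely many functions of the form
`max (α·f + β) 0` with `f ∈ F`. -/
theorem stmt14 {Ω : Type} [TopologicalSpace Ω] (F : Set (Ω → ℝ))
    (hcone : IsConvexConeFn F) (hcont : ∀ f ∈ F, Continuous f)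
    (hconst : ∀ c : ℝ, (fun _ : Ω => c) ∈ F) (hmax : MaxPrin F)
    (K : ℕ → Set Ω) (hK : ∀ i, IsCompact (K i)) (hKc : ∀ i, FConvexSet F (K i))
    (hKi : ∀ i, K i ⊂ interior (K (i + 1))) (hKu : (⋃ i, K i) = Set.univ) :
    ∃ p : Ω → ℝ, Continuous p ∧ ProperFn p ∧ (∀ ω, 0 ≤ p ω) ∧
      (fun ω => ((p ω : ℝ) : EReal)) ∈ genCLC F ∧
      ∀ L : Set Ω, IsCompact L →
        ∃ (n : ℕ) (g : Fin n → Ω → ℝ),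
          (∀ i, ∃ f ∈ F, ∃ α β : ℝ, ∀ ω, g i ω = max (α * f ω + β) 0) ∧
          ∀ ω ∈ L, p ω = ⨆ i : Fin n, g i ω := by
  classical
  have KsubInt : ∀ i, K i ⊆ interior (K (i + 1)) := fun i => (hKi i).subset
  have Kmono : Monotone K :=
    monotone_nat_of_le_succ fun n => (KsubInt n).trans interior_subset
  have hmemK : ∀ ω : Ω, ∃ m, ω ∈ K m := fun ω =>
    Set.mem_iUnion.1 (hKu ▸ Set.mem_univ ω)
  -- Step: construction of the building block at each level i
  have step : ∀ i : ℕ, ∃ l : List (Ω → ℝ), (∀ g ∈ l, GoodFn F g) ∧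
      (∀ g ∈ l, ∀ k ∈ K i, g k = 0) ∧
      (∀ ω ∈ K (i + 2) \ interior (K (i + 1)), (i + 1 : ℝ) ≤ msup l ω) := by
    intro i
    have hLc : IsCompact (K (i + 2) \ interior (K (i + 1))) :=
      (hK (i + 2)).diff isOpen_interior
    have key : ∀ ω ∈ K (i + 2) \ interior (K (i + 1)), ∃ g : Ω → ℝ, ∃ U : Set Ω,
        GoodFn F g ∧ (∀ k ∈ K i, g k = 0) ∧ U ∈ 𝓝 ω ∧ ∀ x ∈ U, (i + 1 : ℝ) ≤ g x := by
      intro ω hω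
      have hωK : ω ∉ K i := fun h => hω.2 (KsubInt i h)
      rw [hKc i] at hωK
      simp only [Set.mem_setOf_eq] at hωK
      push_neg at hωK
      obtain ⟨f, hf, hlt⟩ := hωK
      obtain ⟨c', hc1, hc2⟩ := exists_between hlt
      have hc'top : c' ≠ ⊤ := (hc2.trans_le le_top).ne
      have hc'bot : c' ≠ ⊥ := (bot_le.trans_lt hc1).ne'
      set c : ℝ := c'.toReal with hc
      have hcc : (c : EReal) = c' := EReal.coe_toReal hc'top hc'bot
      have hcf : c < f ω := by
        rw [← hcc] at hc2; exact_mod_cast hc2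
      have hKle : ∀ k ∈ K i, f k ≤ c := by
        intro k hk
        have h1 : ((f k : ℝ) : EReal) ≤ ⨆ k ∈ K i, ((f k : ℝ) : EReal) :=
          le_iSup₂ (f := fun k (_ : k ∈ K i) => ((f k : ℝ) : EReal)) k hk
        have h2 : ((f k : ℝ) : EReal) < (c : EReal) := by rw [hcc]; exact h1.trans_lt hc1
        exact_mod_cast h2.le
      have hsub : (0 : ℝ) < f ω - c := by linarith
      set α : ℝ := (i + 2) / (f ω - c) with hα
      have hαpos : 0 < α := div_pos (by positivity) hsub
      set β : ℝ := -(α * c) with hβ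
      refine ⟨fun x => max (α * f x + β) 0, {x | (i + 1 : ℝ) < α * f x + β},
        ⟨f, hf, α, β, hαpos.le, fun _ => rfl⟩, ?_, ?_, ?_⟩
      · intro k hk
        have h1 : α * f k + β ≤ 0 := by
          have := hKle k hk
          nlinarith
        simpa [max_eq_right h1]
      · have hval : α * (f ω - c) = (i + 2 : ℝ) := div_mul_cancel₀ _ hsub.ne'
        have hωU : (i + 1 : ℝ) < α * f ω + β := by nlinarith
        have hopen : IsOpen {x | (i + 1 : ℝ) < α * f x + β} :=
          isOpen_lt continuous_const
            ((continuous_const.mul (hcont f hf)).add continuous_const)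
        exact hopen.mem_nhds hωU
      · intro x hx
        exact le_trans (le_of_lt hx) (le_max_left _ _)
    choose! g U hgood hzero hnhds hbig using key
    obtain ⟨t, htL, hcov⟩ := hLc.elim_nhds_subcover U fun x hx => hnhds x hx
    refine ⟨t.toList.map g, ?_, ?_, ?_⟩
    · intro g' hg'
      obtain ⟨x, hx, rfl⟩ := List.mem_map.1 hg'
      exact hgood x (htL x (Finset.mem_toList.1 hx))
    · intro g' hg' k hk
      obtain ⟨x, hx, rfl⟩ := List.mem_map.1 hg'
      exact hzero x (htL x (Finset.mem_toList.1 hx)) k hk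
    · intro ω hω
      obtain ⟨x, hxt, hxU⟩ := Set.mem_iUnion₂.1 (hcov hω)
      refine le_trans (hbig x (htL x hxt) ω hxU) (le_msup ?_ ω)
      exact List.mem_map.2 ⟨x, Finset.mem_toList.2 hxt, rfl⟩
  choose l hgood hzero hbig using step
  set v : ℕ → Ω → ℝ := fun i => msup (l i) with hv
  have hvnn : ∀ i ω, 0 ≤ v i ω := fun i ω => msup_nonneg _ _
  have hvzero : ∀ i, ∀ ω ∈ K i, v i ω = 0 := fun i ω hω =>
    le_antisymm (msup_le le_rfl ω fun g hg => (hzero i g hg ω hω).le) (msup_nonneg _ _)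
  -- concatenated lists
  let LL : ℕ → List (Ω → ℝ) := fun n => Nat.rec (l 0) (fun n acc => acc ++ l (n + 1)) n
  have LLsucc : ∀ n, LL (n + 1) = LL n ++ l (n + 1) := fun n => rfl
  have LLmem : ∀ {i n : ℕ}, i ≤ n → ∀ g ∈ l i, g ∈ LL n := by
    intro i n
    induction n with
    | zero =>
      intro hi g hg
      obtain rfl : i = 0 := Nat.le_zero.1 hi
      exact hg
    | succ n ih =>
      intro hi g hg
      rw [LLsucc]
      rcases Nat.lt_or_ge i (n + 1) with h | h
      · exact List.mem_append_left _ (ih (by omega) g hg)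
      · have : i = n + 1 := by omega
        subst this
        exact List.mem_append_right _ hg
  have LLmem' : ∀ n g, g ∈ LL n → ∃ i ≤ n, g ∈ l i := by
    intro n
    induction n with
    | zero => intro g hg; exact ⟨0, le_rfl, hg⟩
    | succ n ih =>
      intro g hg
      rw [LLsucc] at hg
      rcases List.mem_append.1 hg with h | h
      · obtain ⟨i, hi, hgi⟩ := ih g h
        exact ⟨i, by omega, hgi⟩
      · exact ⟨n + 1, le_rfl, h⟩
  have LLgood : ∀ n, ∀ g ∈ LL n, GoodFn F g := by
    intro n g hg
    obtain ⟨i, _, hgi⟩ := LLmem' n g hg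
    exact hgood i g hgi
  -- pointwise bounds
  have hbdd : ∀ {n : ℕ} (ω : Ω), ω ∈ K n → ∀ i, v i ω ≤ msup (LL n) ω := by
    intro n ω hω i
    rcases le_or_gt i n with h | h
    · exact msup_le (msup_nonneg _ _) ω fun g hg => le_msup (LLmem h g hg) ω
    · rw [hvzero i ω (Kmono h.le hω)]; exact msup_nonneg _ _
  have hBdd : ∀ ω : Ω, BddAbove (Set.range fun i => v i ω) := by
    intro ω
    obtain ⟨n, hn⟩ := hmemK ω
    exact ⟨msup (LL n) ω, by rintro x ⟨i, rfl⟩; exact hbdd ω hn i⟩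
  set p : Ω → ℝ := fun ω => ⨆ i, v i ω with hp
  have hpnn : ∀ ω, 0 ≤ p ω := fun ω => (hvnn 0 ω).trans (le_ciSup (hBdd ω) 0)
  have hple : ∀ (ω : Ω) (n : ℕ), ω ∈ K n → p ω = msup (LL n) ω := by
    intro ω n hω
    apply le_antisymm
    · exact Real.iSup_le (hbdd ω hω) (msup_nonneg _ _)
    · refine msup_le (hpnn ω) ω fun g hg => ?_
      obtain ⟨i, _, hgi⟩ := LLmem' n g hg
      exact (le_msup hgi ω).trans (le_ciSup (hBdd ω) i)
  have hLLcont : ∀ n, Continuous (msup (LL n)) := fun n =>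
    msup_continuous fun g hg => (LLgood n g hg).continuous hcont
  have hpcont : Continuous p := by
    rw [continuous_iff_continuousAt]
    intro ω
    obtain ⟨m, hm⟩ := hmemK ω
    have hmem : interior (K (m + 1)) ∈ 𝓝 ω := isOpen_interior.mem_nhds (KsubInt m hm)
    exact ((hLLcont (m + 1)).continuousAt).congr
      (eventually_of_mem hmem fun x hx => (hple x (m + 1) (interior_subset hx)).symm)
  have hlow : ∀ (i : ℕ) (ω : Ω), ω ∉ K (i + 1) → (i + 1 : ℝ) ≤ p ω := by
    intro i ω hω
    have hex : ∃ m, ω ∈ K m := hmemK ω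
    have hm : ω ∈ K (Nat.find hex) := Nat.find_spec hex
    have hmge : i + 2 ≤ Nat.find hex := by
      by_contra h
      push_neg at h
      exact hω (Kmono (by omega) hm)
    obtain ⟨j, hj⟩ : ∃ j, Nat.find hex = j + 2 := ⟨Nat.find hex - 2, by omega⟩
    rw [hj] at hm
    have hnot : ω ∉ interior (K (j + 1)) := fun h =>
      Nat.find_min hex (by omega) (interior_subset h)
    have h1 : (j + 1 : ℝ) ≤ v j ω := hbig j ω ⟨hm, hnot⟩
    have h2 : v j ω ≤ p ω := le_ciSup (hBdd ω) j
    have hij : i ≤ j := by omega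
    have : (i : ℝ) ≤ (j : ℝ) := Nat.cast_le.2 hij
    linarith
  have hproper : ProperFn p := by
    intro S hS
    rcases S.eq_empty_or_nonempty with rfl | hne
    · simp
    · obtain ⟨b, hb⟩ := hS.bddAbove
      have hsub : p ⁻¹' S ⊆ K (⌈b⌉₊ + 1) := by
        intro ω hω
        by_contra h
        have h1 := hlow ⌈b⌉₊ ω h
        have h2 : p ω ≤ b := hb hω
        have h3 : b ≤ (⌈b⌉₊ : ℝ) := Nat.le_ceil b
        linarith
      exact (hK (⌈b⌉₊ + 1)).of_isClosed_subset (hS.isClosed.preimage hpcont) hsub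
  have hpmem : (fun ω => ((p ω : ℝ) : EReal)) ∈ genCLC F := by
    have h := (genCLC_isCLC F).2 ℕ (fun i ω => ((v i ω : ℝ) : EReal))
      fun i => msup_coe_mem hcone hconst (l i) (hgood i)
    have heq : (fun ω => ((p ω : ℝ) : EReal)) = fun ω => ⨆ i, ((v i ω : ℝ) : EReal) := by
      funext ω
      exact Monotone.map_ciSup_of_continuousAt continuous_coe_real_ereal.continuousAt
        EReal.coe_strictMono.monotone (hBdd ω)
    rwa [heq]
  refine ⟨p, hpcont, hproper, hpnn, hpmem, ?_⟩
  intro L hL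
  have hcov : L ⊆ ⋃ i, interior (K i) := by
    intro x _
    obtain ⟨m, hm⟩ := hmemK x
    exact Set.mem_iUnion.2 ⟨m + 1, KsubInt m hm⟩
  obtain ⟨t, ht⟩ := hL.elim_finite_subcover (fun i => interior (K i))
    (fun _ => isOpen_interior) hcov
  have hLK : L ⊆ K (t.sup id) := by
    intro x hx
    obtain ⟨i, hit, hxi⟩ := Set.mem_iUnion₂.1 (ht hx)
    exact Kmono (Finset.le_sup (f := id) hit) (interior_subset hxi)
  refine ⟨(LL (t.sup id)).length, fun j => (LL (t.sup id)).get j, ?_, ?_⟩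
  · intro j
    obtain ⟨f, hf, α, β, _, hgj⟩ :=
      LLgood (t.sup id) _ ((LL (t.sup id)).get_mem j)
    exact ⟨f, hf, α, β, hgj⟩
  · intro ω hω
    rw [hple ω (t.sup id) (hLK hω)]
    exact msup_eq_iSup (LL (t.sup id)) (fun g hg ω' => (LLgood _ g hg).nonneg ω') ω
end

section
/- Let Ω be a locally compact, σ-compact Hausdorff space and 𝒜 an algebra of continuous real-valued functions on Ω, containing constants and closed in the compact-open topology, such that Ω is ℱ-convex for the complete lattice cone ℱ generated by 𝒜. Then for every net (ω_α) in Ω with no accumulation point in Ω, there exist a ∈ 𝒜 and a subsequence (ω_j) of the net such that a(ω_j) → ∞. -/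
open Filter Topology Set

private lemma stmt18_L1 {z : EReal} {α r : ℝ} (hα : 0 < α)
    (hr : (r : EReal) < (α : EReal) * z) :
    ∃ q : ℝ, (q : EReal) < z ∧ r ≤ α * q := by
  induction z using EReal.rec with
  | bot => rw [EReal.coe_mul_bot_of_pos hα] at hr; exact absurd hr not_lt_bot
  | coe w =>
      rw [← EReal.coe_mul, EReal.coe_lt_coe_iff] at hr
      obtain ⟨q, hq1, hq2⟩ := exists_between ((div_lt_iff₀' hα).2 hr)
      refine ⟨q, by exact_mod_cast hq2, ?_⟩
      have := (div_le_iff₀' hα).1 hq1.le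
      linarith
  | top =>
      refine ⟨r / α, EReal.coe_lt_top _, le_of_eq ?_⟩
      field_simp

private lemma stmt18_L2 {u v : EReal} {α β r : ℝ} (hα : 0 < α) (hβ : 0 < β)
    (hr : (r : EReal) < (α : EReal) * u + (β : EReal) * v) :
    ∃ p q : ℝ, (p : EReal) < u ∧ (q : EReal) < v ∧ r ≤ α * p + β * q := by
  induction u using EReal.rec with
  | bot =>
      rw [EReal.coe_mul_bot_of_pos hα, EReal.bot_add] at hr
      exact absurd hr not_lt_bot
  | coe s =>
      induction v using EReal.rec with
      | bot =>
          rw [EReal.coe_mul_bot_of_pos hβ, EReal.add_bot] at hr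
          exact absurd hr not_lt_bot
      | coe t =>
          rw [← EReal.coe_mul, ← EReal.coe_mul, ← EReal.coe_add, EReal.coe_lt_coe_iff] at hr
          set ε := (α * s + β * t - r) / (α + β + 1) with hεdef
          have hεpos : 0 < ε := div_pos (by linarith) (by linarith)
          have h1 : (α + β + 1) * ε = α * s + β * t - r := by
            rw [hεdef]; field_simp
          refine ⟨s - ε, t - ε, by exact_mod_cast sub_lt_self s hεpos,
            by exact_mod_cast sub_lt_self t hεpos, ?_⟩
          nlinarith [hεpos, hα.le, hβ.le]
      | top =>
          refine ⟨s - 1, (r - α * (s - 1)) / β, by exact_mod_cast sub_one_lt s,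
            EReal.coe_lt_top _, le_of_eq ?_⟩
          field_simp
          ring
  | top =>
      have hq : ∃ q : ℝ, (q : EReal) < v := by
        induction v using EReal.rec with
        | bot =>
            rw [EReal.coe_mul_bot_of_pos hβ, EReal.add_bot] at hr
            exact absurd hr not_lt_bot
        | coe t => exact ⟨t - 1, by exact_mod_cast sub_one_lt t⟩
        | top => exact ⟨0, EReal.coe_lt_top _⟩
      obtain ⟨q, hqv⟩ := hq
      refine ⟨(r - β * q) / α, q, EReal.coe_lt_top _, hqv, le_of_eq ?_⟩
      field_simp
      ring


private lemma stmt18_comp_mem {Ω : Type} [TopologicalSpace Ω]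
    (A : Subalgebra ℝ C(Ω, ℝ)) (hclosed : IsClosed (A : Set C(Ω, ℝ)))
    {a : C(Ω, ℝ)} (ha : a ∈ A) (g : C(ℝ, ℝ)) : g.comp a ∈ A := by
  have hpoly : ∀ p : Polynomial ℝ, Polynomial.aeval a p ∈ A := by
    intro p
    have h1 : Algebra.adjoin ℝ {a} ≤ A := Algebra.adjoin_le (by simpa using ha)
    exact h1 (Polynomial.aeval_mem_adjoin_singleton ℝ a)
  have hap : ∀ n : ℕ, ∃ p : Polynomial ℝ, ∀ t ∈ Set.Icc (-(n : ℝ) - 1) ((n : ℝ) + 1),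
      |p.eval t - g t| < 1 / (n + 1) := fun n =>
    exists_polynomial_near_of_continuousOn _ _ g g.continuous.continuousOn _
      (by positivity)
  choose q hq using hap
  have htend : Tendsto (fun n => Polynomial.aeval a (q n)) atTop (𝓝 (g.comp a)) := by
    rw [ContinuousMap.tendsto_iff_forall_isCompact_tendstoUniformlyOn]
    intro C hC
    rw [Metric.tendstoUniformlyOn_iff]
    intro ε hε
    obtain ⟨R, hR⟩ : ∃ R : ℝ, ∀ y ∈ C, |a y| ≤ R := by
      obtain ⟨R, hR⟩ := (hC.image a.continuous).isBounded.subset_closedBall 0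
      exact ⟨R, fun y hy => by
        simpa [Real.dist_eq] using hR (mem_image_of_mem _ hy)⟩
    have h1 : ∀ᶠ n : ℕ in atTop, R ≤ (n : ℝ) :=
      tendsto_natCast_atTop_atTop.eventually_ge_atTop R
    have h2 : ∀ᶠ n : ℕ in atTop, 1 / ((n : ℝ) + 1) < ε := by
      have : Tendsto (fun n : ℕ => 1 / ((n : ℝ) + 1)) atTop (𝓝 0) :=
        tendsto_one_div_add_atTop_nhds_zero_nat
      exact this.eventually_lt_const hε
    filter_upwards [h1, h2] with n hn1 hn2 y hy
    have hmem : a y ∈ Set.Icc (-(n : ℝ) - 1) ((n : ℝ) + 1) := by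
      have := hR y hy
      constructor <;> [linarith [abs_le.1 this |>.1]; linarith [abs_le.1 this |>.2]]
    have := hq n (a y) hmem
    rw [Polynomial.aeval_continuousMap_apply]
    rw [Real.dist_eq]
    calc |g.comp a y - (q n).eval (a y)| = |(q n).eval (a y) - g (a y)| := by
          rw [abs_sub_comm]; rfl
      _ < 1 / (n + 1) := this
      _ < ε := hn2
  exact hclosed.mem_of_tendsto htend (Eventually.of_forall fun n => hpoly (q n))

private lemma stmt18_sep {Ω : Type} [TopologicalSpace Ω]
    (A : Subalgebra ℝ C(Ω, ℝ)) (hclosed : IsClosed (A : Set C(Ω, ℝ)))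
    {K : Set Ω} {ω : Ω} {f : Ω → EReal}
    (hf : f ∈ genCLC {g : Ω → ℝ | ∃ a ∈ A, g = fun ω => a ω})
    (hfω : ¬ f ω ≤ ⨆ k ∈ K, f k) (M : ℝ) :
    ∃ a : C(Ω, ℝ), a ∈ A ∧ M < a ω ∧ (∀ y, 0 ≤ a y) ∧ ∀ k ∈ K, a k = 0 := by
  set S : Set (Ω → EReal) :=
    {f | ∀ x : Ω, ∀ r : ℝ, (r : EReal) < f x →
      ∃ a : C(Ω, ℝ), a ∈ A ∧ r < a x ∧ ∀ y, ((a y : ℝ) : EReal) ≤ f y} with hSdef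
  have hSCLC : IsCLC S := by
    constructor
    · rintro f hfS g hgS α β hα hβ x r hr
      rcases hα.lt_or_eq with hα' | hα' <;> rcases hβ.lt_or_eq with hβ' | hβ'
      · -- 0 < α, 0 < β
        obtain ⟨p, q, hp, hq, hpq⟩ := stmt18_L2 hα' hβ' hr
        obtain ⟨a, haA, hax, haf⟩ := hfS x p hp
        obtain ⟨b, hbA, hbx, hbg⟩ := hgS x q hq
        refine ⟨α • a + β • b, A.add_mem (A.smul_mem haA α) (A.smul_mem hbA β), ?_, ?_⟩
        · have h1 : α * p < α * a x := mul_lt_mul_of_pos_left hax hα'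
          have h2 : β * q < β * b x := mul_lt_mul_of_pos_left hbx hβ'
          simp only [ContinuousMap.add_apply, ContinuousMap.smul_apply, smul_eq_mul]
          linarith
        · intro y
          simp only [ContinuousMap.add_apply, ContinuousMap.smul_apply, smul_eq_mul]
          push_cast
          exact add_le_add
            (mul_le_mul_of_nonneg_left (haf y) (by exact_mod_cast hα))
            (mul_le_mul_of_nonneg_left (hbg y) (by exact_mod_cast hβ))
      · -- 0 < α, β = 0
        subst hβ'
        simp only [EReal.coe_zero, zero_mul, add_zero] at hr
        obtain ⟨q, hq, hrq⟩ := stmt18_L1 hα' hr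
        obtain ⟨a, haA, hax, haf⟩ := hfS x q hq
        refine ⟨α • a, A.smul_mem haA α, ?_, ?_⟩
        · have := mul_lt_mul_of_pos_left hax hα'
          simp only [ContinuousMap.smul_apply, smul_eq_mul]
          linarith
        · intro y
          simp only [ContinuousMap.smul_apply, smul_eq_mul, EReal.coe_zero, zero_mul, add_zero]
          push_cast
          exact mul_le_mul_of_nonneg_left (haf y) (by exact_mod_cast hα)
      · -- α = 0, 0 < β
        subst hα'
        simp only [EReal.coe_zero, zero_mul, zero_add] at hr
        obtain ⟨q, hq, hrq⟩ := stmt18_L1 hβ' hr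
        obtain ⟨b, hbA, hbx, hbg⟩ := hgS x q hq
        refine ⟨β • b, A.smul_mem hbA β, ?_, ?_⟩
        · have := mul_lt_mul_of_pos_left hbx hβ'
          simp only [ContinuousMap.smul_apply, smul_eq_mul]
          linarith
        · intro y
          simp only [ContinuousMap.smul_apply, smul_eq_mul, EReal.coe_zero, zero_mul, zero_add]
          push_cast
          exact mul_le_mul_of_nonneg_left (hbg y) (by exact_mod_cast hβ)
      · -- α = β = 0
        subst hα'; subst hβ'
        simp only [EReal.coe_zero, zero_mul, zero_add] at hr
        refine ⟨0, A.zero_mem, ?_, ?_⟩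
        · simpa using (by exact_mod_cast hr : r < (0 : ℝ))
        · intro y
          simp
    · rintro κ F hF x r hr
      obtain ⟨i, hi⟩ : ∃ i, (r : EReal) < F i x := by
        simpa [lt_iSup_iff] using hr
      obtain ⟨a, haA, hax, haf⟩ := hF i x r hi
      exact ⟨a, haA, hax, fun y => (haf y).trans (le_iSup (fun i => F i y) i)⟩
  have hgen : ∀ g ∈ {g : Ω → ℝ | ∃ a ∈ A, g = fun ω => a ω},
      (fun x => ((g x : ℝ) : EReal)) ∈ S := by
    rintro g ⟨a, haA, rfl⟩ x r hr
    have hr' : (r : EReal) < ((a x : ℝ) : EReal) := hr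
    exact ⟨a, haA, by exact_mod_cast hr', fun y => le_refl _⟩
  have hfS : f ∈ S := hf S ⟨hSCLC, hgen⟩
  rw [not_le] at hfω
  obtain ⟨r, hr1, hr2⟩ := EReal.exists_between_coe_real hfω
  obtain ⟨a, haA, hax, haf⟩ := hfS ω r hr2
  have haK : ∀ k ∈ K, a k ≤ r := by
    intro k hk
    have h1 : ((a k : ℝ) : EReal) ≤ ⨆ k ∈ K, f k :=
      (haf k).trans (le_biSup f hk)
    exact_mod_cast h1.trans hr1.le
  set M' : ℝ := max M 0 + 1 with hM'
  have hd : 0 < a ω - r := by linarith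
  set g : ℝ → ℝ := fun t => M' * max 0 ((t - r) / (a ω - r)) with hgdef
  have hgc : Continuous g :=
    continuous_const.mul (continuous_const.max
      ((continuous_id.sub continuous_const).div_const _))
  refine ⟨(⟨g, hgc⟩ : C(ℝ, ℝ)).comp a, stmt18_comp_mem A hclosed haA _, ?_, ?_, ?_⟩
  · have : g (a ω) = M' := by
      rw [hgdef]
      simp only []
      rw [div_self hd.ne', max_eq_right zero_le_one, mul_one]
    simp only [ContinuousMap.comp_apply, ContinuousMap.coe_mk]
    rw [this, hM']
    have := le_max_left M 0
    linarith
  · intro y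
    simp only [ContinuousMap.comp_apply, ContinuousMap.coe_mk]
    exact mul_nonneg (by positivity) (le_max_left _ _)
  · intro k hk
    simp only [ContinuousMap.comp_apply, ContinuousMap.coe_mk]
    rw [hgdef]
    simp only []
    rw [max_eq_left, mul_zero]
    exact div_nonpos_of_nonpos_of_nonneg (by linarith [haK k hk]) hd.le

/-- Let `𝒜` be a closed (compact-open topology) algebra of continuous
functions on a locally compact σ-compact Hausdorff space `Ω` such that `Ω` is
`ℱ`-convex for the complete lattice cone `ℱ` generated by `𝒜`. Then along any
net with no accumulation point there are a function `a ∈ 𝒜` and a subsequence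
of the net on which `a` tends to `∞`. -/
theorem stmt18 {Ω : Type} [TopologicalSpace Ω] [T2Space Ω] [SigmaCompactSpace Ω]
    [WeaklyLocallyCompactSpace Ω]
    (A : Subalgebra ℝ C(Ω, ℝ)) (hclosed : IsClosed (A : Set C(Ω, ℝ)))
    (hconv : ∀ K : Set Ω, IsCompact K →
      IsCompact {ω | ∀ f ∈ genCLC {g : Ω → ℝ | ∃ a ∈ A, g = fun ω => a ω},
        f ω ≤ ⨆ k ∈ K, f k})
    (ι : Type) [Preorder ι] [Nonempty ι] [IsDirected ι (· ≤ ·)]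
    (x : ι → Ω) (hx : ∀ ω : Ω, ¬ MapClusterPt ω atTop x) :
    ∃ a ∈ A, ∃ φ : ℕ → ι, Tendsto (fun j => a (x (φ j))) atTop atTop := by
  classical
  have hesc : ∀ C : Set Ω, IsCompact C → ∃ i, x i ∉ C := by
    intro C hC
    by_contra h
    push_neg at h
    have hne : (atTop : Filter ι).NeBot := atTop_neBot_iff.2 ⟨‹Nonempty ι›, ‹_›⟩
    have hle : Filter.map x atTop ≤ 𝓟 C :=
      le_principal_iff.2 (mem_map.2 (univ_mem' h))
    obtain ⟨ω, -, hω⟩ := hC.exists_clusterPt hle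
    exact hx ω hω
  let E := CompactExhaustion.choice Ω
  have hHc : ∀ n : ℕ, IsCompact {ω | ∀ f ∈ genCLC
      {g : Ω → ℝ | ∃ a ∈ A, g = fun ω => a ω}, f ω ≤ ⨆ k ∈ E n, f k} :=
    fun n => hconv _ (E.isCompact n)
  choose idx hidx using fun n => hesc _ (hHc n)
  let m : ℕ → ℕ := fun j => Nat.rec 0 (fun _ prev => max (E.find (x (idx prev))) prev + 1) j
  have hm_succ : ∀ j, m (j + 1) = max (E.find (x (idx (m j)))) (m j) + 1 := fun j => rfl
  have hm_mono : StrictMono m := strictMono_nat_of_lt_succ fun j => by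
    rw [hm_succ]
    exact Nat.lt_succ_of_le (le_max_right _ _)
  let ω' : ℕ → Ω := fun j => x (idx (m j))
  have hω'K : ∀ j, ω' j ∈ E (m (j + 1)) := by
    intro j
    rw [CompactExhaustion.mem_iff_find_le, hm_succ]
    exact (le_max_left _ _).trans (Nat.le_succ _)
  have hstep : ∀ j : ℕ, ∃ a : C(Ω, ℝ), a ∈ A ∧ (j : ℝ) < a (ω' j) ∧
      (∀ y, 0 ≤ a y) ∧ ∀ k ∈ E (m j), a k = 0 := by
    intro j
    have h1 := hidx (m j)
    rw [mem_setOf_eq] at h1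
    push_neg at h1
    obtain ⟨f, hf1, hf2⟩ := h1
    exact stmt18_sep A hclosed hf1 (not_le.2 hf2) j
  choose a haA haω hapos hazero using hstep
  have hvan : ∀ n l : ℕ, n ≤ l → ∀ y ∈ E (m n), a l y = 0 := fun n l h y hy =>
    hazero l y (E.subset (hm_mono.monotone h) hy)
  set F : Ω → ℝ := fun y => ∑' l, a l y with hFdef
  have key : ∀ n : ℕ, ∀ y ∈ E (m n), F y = ∑ l ∈ Finset.range n, a l y := by
    intro n y hy
    exact tsum_eq_sum fun l hl =>
      hvan n l (Nat.le_of_not_lt fun hc => hl (Finset.mem_range.2 hc)) y hy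
  have hFcont : Continuous F := by
    rw [continuous_iff_continuousAt]
    intro y₀
    have hy₀ : y₀ ∈ interior (E (E.find y₀ + 1)) :=
      E.subset_interior_succ _ (E.mem_find y₀)
    have hsub : interior (E (E.find y₀ + 1)) ⊆ E (m (E.find y₀ + 1)) :=
      interior_subset.trans (E.subset hm_mono.le_apply)
    have heq : F =ᶠ[𝓝 y₀] fun y => ∑ l ∈ Finset.range (E.find y₀ + 1), a l y := by
      filter_upwards [isOpen_interior.mem_nhds hy₀] with y hy
      exact key _ y (hsub hy)
    exact ContinuousAt.congr
      ((continuous_finset_sum _ fun l _ => (a l).continuous).continuousAt) heq.symm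
  set Fc : C(Ω, ℝ) := ⟨F, hFcont⟩ with hFc
  let Sc : ℕ → C(Ω, ℝ) := fun n => ∑ l ∈ Finset.range n, a l
  have hScapp : ∀ n y, Sc n y = ∑ l ∈ Finset.range n, a l y := by
    intro n y
    simp [Sc]
  have hScA : ∀ n, Sc n ∈ A := fun n => sum_mem fun l _ => haA l
  have htend : Tendsto Sc atTop (𝓝 Fc) := by
    rw [ContinuousMap.tendsto_iff_forall_isCompact_tendstoUniformlyOn]
    intro C hC
    obtain ⟨N, hN⟩ := E.exists_superset_of_isCompact hC
    rw [Metric.tendstoUniformlyOn_iff]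
    intro ε hε
    filter_upwards [eventually_ge_atTop N] with n hn y hy
    have hyE : y ∈ E (m n) := E.subset (hn.trans hm_mono.le_apply) (hN hy)
    have heq : Sc n y = Fc y := by
      rw [hScapp, show Fc y = F y from rfl, key n y hyE]
    rw [heq]
    simpa using hε
  have hFA : Fc ∈ A := hclosed.mem_of_tendsto htend (Eventually.of_forall hScA)
  refine ⟨Fc, hFA, fun j => idx (m j), ?_⟩
  have hgrow : ∀ j : ℕ, (j : ℝ) ≤ Fc (x (idx (m j))) := by
    intro j
    have h1 : Fc (ω' j) = ∑ l ∈ Finset.range (j + 1), a l (ω' j) :=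
      key (j + 1) (ω' j) (hω'K j)
    have h2 : a j (ω' j) ≤ ∑ l ∈ Finset.range (j + 1), a l (ω' j) :=
      Finset.single_le_sum (fun l _ => hapos l (ω' j)) (Finset.self_mem_range_succ j)
    calc (j : ℝ) ≤ a j (ω' j) := (haω j).le
      _ ≤ _ := h2
      _ = Fc (ω' j) := h1.symm
  exact tendsto_atTop_mono hgrow tendsto_natCast_atTop_atTop
end
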